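/- For every integer t ≥ 1, there exist a constant c_t > 0 depending only on t and infinitely many graphs G with path-independence number path-α(G) = t such that for every λ ≥ 1, the mixing time of the Glauber dynamics on the independent sets of G with fugacity λ satisfies τ_{G,λ} ≥ c_t · (nλ)^t, where n = |V(G)|. -/

import Mathlib

open Finset

section HardCoreDefs

variable {V : Type*} [Fintype V] [DecidableEq V]

/-- `I` is an independent set of the simple graph `G`. -/
def IsIndep (G : SimpleGraph V) (I : Finset V) : Prop :=
  ∀ u ∈ I, ∀ v ∈ I, ¬ G.Adj u v

open Classical in
/-- The set `𝓘(G)` of independent sets of `G`. -/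
noncomputable def indepSets (G : SimpleGraph V) : Finset (Finset V) :=
  Finset.univ.filter fun I => IsIndep G I

/-- The hard-core partition function `Z_G(λ)`. -/
noncomputable def Z (G : SimpleGraph V) (lam : ℝ) : ℝ :=
  ∑ I ∈ indepSets G, lam ^ I.card

/-- The hard-core distribution `π_{G,λ}`. -/
noncomputable def hardCore (G : SimpleGraph V) (lam : ℝ) (I : Finset V) : ℝ :=
  lam ^ I.card / Z G lam

open Classical in
/-- The transition probabilities of the Glauber dynamics on independent sets of `G`
with fugacity `λ`. -/
noncomputable def glauberP (G : SimpleGraph V) (lam : ℝ) (I J : Finset V) : ℝ :=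
  (1 / (Fintype.card V : ℝ)) * ∑ v : V,
    if v ∈ I then
      (if J = I.erase v then 1 / (lam + 1) else if J = I then lam / (lam + 1) else 0)
    else if IsIndep G (insert v I) then
      (if J = insert v I then lam / (lam + 1) else if J = I then 1 / (lam + 1) else 0)
    else (if J = I then 1 else 0)

/-- One step of the Glauber dynamics, applied to a distribution on independent sets. -/
noncomputable def stepDist (G : SimpleGraph V) (lam : ℝ) (μ : Finset V → ℝ) :
    Finset V → ℝ :=
  fun J => ∑ I ∈ indepSets G, μ I * glauberP G lam I J

/-- The distribution of the Glauber dynamics after `t` steps started from `I`. -/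
noncomputable def distAfter (G : SimpleGraph V) (lam : ℝ) (I : Finset V) (t : ℕ) :
    Finset V → ℝ :=
  (stepDist G lam)^[t] (fun J => if J = I then 1 else 0)

/-- Total variation distance between two distributions on independent sets. -/
noncomputable def tvDist (G : SimpleGraph V) (μ ν : Finset V → ℝ) : ℝ :=
  (1 / 2) * ∑ I ∈ indepSets G, |μ I - ν I|

/-- The mixing time `τ_{G,λ}` of the Glauber dynamics. -/
noncomputable def mixingTime (G : SimpleGraph V) (lam : ℝ) : ℕ :=
  sInf {t : ℕ | ∀ I ∈ indepSets G,
    tvDist G (distAfter G lam I t) (hardCore G lam) ≤ 1 / 4}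

/-- `λ̃ = e^{|ln λ|} = max (λ, 1/λ)`. -/
noncomputable def lamTilde (lam : ℝ) : ℝ := max lam lam⁻¹

/-- The independence number of the subgraph of `G` induced by `S`. -/
noncomputable def alphaOn (G : SimpleGraph V) (S : Finset V) : ℕ :=
  ((indepSets G).filter fun I => I ⊆ S).sup Finset.card

/-- The number of independent sets of the subgraph of `G` induced by `S`. -/
noncomputable def numIndepOn (G : SimpleGraph V) (S : Finset V) : ℕ :=
  ((indepSets G).filter fun I => I ⊆ S).card

/-- The subgraph of `G` induced by a finite vertex set `S`. -/
def inducedF (G : SimpleGraph V) (S : Finset V) : SimpleGraph {x : V // x ∈ S} :=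
  SimpleGraph.comap Subtype.val G

end HardCoreDefs
section Decomp

variable {V : Type*} [Fintype V] [DecidableEq V]

/-- `X : Fin p → Finset V` is a path decomposition of `G`. -/
def IsPathDecomp (G : SimpleGraph V) (p : ℕ) (X : Fin p → Finset V) : Prop :=
  (∀ v : V, ∃ i, v ∈ X i) ∧
  (∀ u v : V, G.Adj u v → ∃ i, u ∈ X i ∧ v ∈ X i) ∧
  (∀ v : V, ∀ i j k : Fin p, i ≤ j → j ≤ k → v ∈ X i → v ∈ X k → v ∈ X j)

/-- The pathwidth of `G` : the least `w` such that `G` has a path decomposition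
with all bags of size at most `w + 1`. -/
noncomputable def pathwidth (G : SimpleGraph V) : ℕ :=
  sInf {w : ℕ | ∃ (p : ℕ) (X : Fin p → Finset V),
    IsPathDecomp G p X ∧ ∀ i, (X i).card ≤ w + 1}

/-- `(T, X)` is a tree decomposition of `G`. -/
def IsTreeDecomp {ι : Type*} (G : SimpleGraph V) (T : SimpleGraph ι) (X : ι → Finset V) : Prop :=
  T.IsTree ∧
  (∀ v : V, ∃ t, v ∈ X t) ∧
  (∀ u v : V, G.Adj u v → ∃ t, u ∈ X t ∧ v ∈ X t) ∧
  (∀ v : V, (T.induce {t | v ∈ X t}).Connected)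

/-- The treewidth of `G`. -/
noncomputable def treewidth (G : SimpleGraph V) : ℕ :=
  sInf {w : ℕ | ∃ (m : ℕ) (T : SimpleGraph (Fin m)) (X : Fin m → Finset V),
    IsTreeDecomp G T X ∧ ∀ t, (X t).card ≤ w + 1}

end Decomp
section AlphaDecomp

variable {V : Type*} [Fintype V] [DecidableEq V]

/-- The path-independence number of `G`: the minimum, over path decompositions of `G`, of the
maximum independence number of a bag. -/
noncomputable def pathAlpha (G : SimpleGraph V) : ℕ :=
  sInf {k : ℕ | ∃ (p : ℕ) (X : Fin p → Finset V),
    IsPathDecomp G p X ∧ ∀ i, alphaOn G (X i) ≤ k}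

/-- The tree-independence number of `G`: the minimum, over tree decompositions of `G`, of the
maximum independence number of a bag. -/
noncomputable def treeAlpha (G : SimpleGraph V) : ℕ :=
  sInf {k : ℕ | ∃ (m : ℕ) (T : SimpleGraph (Fin m)) (X : Fin m → Finset V),
    IsTreeDecomp G T X ∧ ∀ t, alphaOn G (X t) ≤ k}

end AlphaDecomp
section ChainLemmas
set_option linter.unusedSectionVars false

variable {V : Type*} [Fintype V] [DecidableEq V]

lemma mem_indepSets_iff {G : SimpleGraph V} {I : Finset V} :
    I ∈ indepSets G ↔ IsIndep G I := by
  classical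
  simp [indepSets]

lemma isIndep_subset {G : SimpleGraph V} {I J : Finset V} (h : I ⊆ J) (hJ : IsIndep G J) :
    IsIndep G I := fun u hu v hv => hJ u (h hu) v (h hv)

lemma isIndep_empty (G : SimpleGraph V) : IsIndep G ∅ := by simp [IsIndep]

lemma empty_mem_indepSets (G : SimpleGraph V) : ∅ ∈ indepSets G :=
  mem_indepSets_iff.2 (isIndep_empty G)

lemma sum_pair_ite {s : Finset (Finset V)} {A B : Finset V} (hAB : A ≠ B) (a b : ℝ) :
    ∑ J ∈ s, (if J = A then a else if J = B then b else 0)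
      = (if A ∈ s then a else 0) + (if B ∈ s then b else 0) := by
  classical
  have h : ∀ J ∈ s, (if J = A then a else if J = B then b else 0)
      = (if J = A then a else 0) + (if J = B then b else 0) := by
    intro J _
    by_cases h1 : J = A
    · subst h1; simp [hAB]
    · by_cases h2 : J = B <;> simp [h1, h2, Ne.symm hAB]
  rw [Finset.sum_congr rfl h, Finset.sum_add_distrib, Finset.sum_ite_eq', Finset.sum_ite_eq']

lemma glauberP_nonneg {G : SimpleGraph V} {lam : ℝ} (hlam : 0 ≤ lam) (I J : Finset V) :
    0 ≤ glauberP G lam I J := by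
  classical
  have h1 : (0:ℝ) < lam + 1 := by linarith
  unfold glauberP
  apply mul_nonneg (by positivity)
  apply Finset.sum_nonneg
  intro v _
  split_ifs <;> positivity

lemma glauberP_row_sum {G : SimpleGraph V} {lam : ℝ} (hlam : 0 ≤ lam)
    (hV : 0 < Fintype.card V) {I : Finset V} (hI : IsIndep G I) :
    ∑ J ∈ indepSets G, glauberP G lam I J = 1 := by
  classical
  have h1 : (0:ℝ) < lam + 1 := by linarith
  unfold glauberP
  rw [← Finset.mul_sum, Finset.sum_comm]
  have hterm : ∀ v : V,
      (∑ J ∈ indepSets G,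
        if v ∈ I then
          (if J = I.erase v then 1 / (lam + 1) else if J = I then lam / (lam + 1) else 0)
        else if IsIndep G (insert v I) then
          (if J = insert v I then lam / (lam + 1) else if J = I then 1 / (lam + 1) else 0)
        else (if J = I then 1 else 0)) = 1 := by
    intro v
    by_cases hv : v ∈ I
    · simp only [if_pos hv]
      rw [sum_pair_ite (by simpa using (Finset.erase_ne_self (s := I) (a := v)).2 hv)]
      have hm1 : I.erase v ∈ indepSets G :=
        mem_indepSets_iff.2 (isIndep_subset (Finset.erase_subset v I) hI)
      have hm2 : I ∈ indepSets G := mem_indepSets_iff.2 hI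
      rw [if_pos hm1, if_pos hm2]
      field_simp
      ring
    · simp only [if_neg hv]
      by_cases hind : IsIndep G (insert v I)
      · simp only [if_pos hind]
        rw [sum_pair_ite (by simpa using (Finset.insert_ne_self (s := I) (a := v)).2 hv)]
        have hm1 : insert v I ∈ indepSets G := mem_indepSets_iff.2 hind
        have hm2 : I ∈ indepSets G := mem_indepSets_iff.2 hI
        rw [if_pos hm1, if_pos hm2]
        field_simp
      · simp only [if_neg hind]
        rw [Finset.sum_ite_eq' (indepSets G) I (fun _ => (1:ℝ))]
        exact if_pos (mem_indepSets_iff.2 hI)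
  rw [Finset.sum_congr rfl (fun v _ => hterm v), Finset.sum_const, Finset.card_univ,
    nsmul_eq_mul, mul_one]
  field_simp

end ChainLemmas
section ChainLemmas2
set_option linter.unusedSectionVars false
set_option maxHeartbeats 1000000

variable {V : Type*} [Fintype V] [DecidableEq V]

lemma glauberP_rev {G : SimpleGraph V} {lam : ℝ} (hlam : 0 ≤ lam)
    {I J : Finset V} (hI : IsIndep G I) (hJ : IsIndep G J) :
    lam ^ I.card * glauberP G lam I J = lam ^ J.card * glauberP G lam J I := by
  classical
  rcases eq_or_ne I J with rfl | hne
  · rfl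
  have key : ∀ v : V,
      lam ^ I.card *
        (if v ∈ I then
          (if J = I.erase v then 1 / (lam + 1) else if J = I then lam / (lam + 1) else 0)
        else if IsIndep G (insert v I) then
          (if J = insert v I then lam / (lam + 1) else if J = I then 1 / (lam + 1) else 0)
        else (if J = I then 1 else 0))
      = lam ^ J.card *
        (if v ∈ J then
          (if I = J.erase v then 1 / (lam + 1) else if I = J then lam / (lam + 1) else 0)
        else if IsIndep G (insert v J) then
          (if I = insert v J then lam / (lam + 1) else if I = J then 1 / (lam + 1) else 0)
        else (if I = J then 1 else 0)) := by
    intro v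
    by_cases hvI : v ∈ I <;> by_cases hvJ : v ∈ J
    · -- both contain v : both sides 0
      have h1 : J ≠ I.erase v := fun h => (Finset.notMem_erase v I) (h ▸ hvJ)
      have h2 : I ≠ J.erase v := fun h => (Finset.notMem_erase v J) (h ▸ hvI)
      rw [if_pos hvI, if_pos hvJ, if_neg h1, if_neg h2, if_neg hne, if_neg (Ne.symm hne)]
      ring
    · -- v ∈ I, v ∉ J
      rw [if_pos hvI, if_neg hvJ]
      by_cases h : J = I.erase v
      · have hIJ : I = insert v J := by rw [h, Finset.insert_erase hvI]
        have hind : IsIndep G (insert v J) := by rw [← hIJ]; exact hI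
        have hcard : I.card = J.card + 1 := by
          rw [hIJ, Finset.card_insert_of_notMem hvJ]
        rw [if_pos h, if_pos hind, if_pos hIJ, hcard, pow_succ]
        have h1 : (0:ℝ) < lam + 1 := by linarith
        ring
        try ring
      · have hIJ : I ≠ insert v J := by
          intro hh
          apply h
          rw [hh, Finset.erase_insert hvJ]
        rw [if_neg h, if_neg (Ne.symm hne)]
        by_cases hind : IsIndep G (insert v J)
        · rw [if_pos hind, if_neg hIJ, if_neg hne]; ring
        · rw [if_neg hind, if_neg hne]; ring
    · -- v ∉ I, v ∈ J (mirror)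
      rw [if_neg hvI, if_pos hvJ]
      by_cases h : I = J.erase v
      · have hJI : J = insert v I := by rw [h, Finset.insert_erase hvJ]
        have hind : IsIndep G (insert v I) := by rw [← hJI]; exact hJ
        have hcard : J.card = I.card + 1 := by
          rw [hJI, Finset.card_insert_of_notMem hvI]
        rw [if_pos h, if_pos hind, if_pos hJI, hcard, pow_succ]
        have h1 : (0:ℝ) < lam + 1 := by linarith
        ring
        try ring
      · have hJI : J ≠ insert v I := by
          intro hh
          apply h
          rw [hh, Finset.erase_insert hvI]
        rw [if_neg h, if_neg hne]
        by_cases hind : IsIndep G (insert v I)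
        · rw [if_pos hind, if_neg hJI, if_neg (Ne.symm hne)]; ring
        · rw [if_neg hind, if_neg (Ne.symm hne)]; ring
    · -- neither
      have h1 : J ≠ insert v I := fun h => hvJ (h ▸ Finset.mem_insert_self v I)
      have h2 : I ≠ insert v J := fun h => hvI (h ▸ Finset.mem_insert_self v J)
      rw [if_neg hvI, if_neg hvJ]
      by_cases hind1 : IsIndep G (insert v I) <;> by_cases hind2 : IsIndep G (insert v J) <;>
        simp only [if_pos, if_neg, hind1, hind2, if_true, if_false, if_neg h1, if_neg h2,
          if_neg hne, if_neg (Ne.symm hne)] <;> ring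
  unfold glauberP
  rw [mul_left_comm, mul_left_comm (lam ^ J.card)]
  congr 1
  rw [Finset.mul_sum, Finset.mul_sum]
  exact Finset.sum_congr rfl (fun v _ => key v)

lemma glauberP_stationary {G : SimpleGraph V} {lam : ℝ} (hlam : 0 ≤ lam)
    (hV : 0 < Fintype.card V) {J : Finset V} (hJ : IsIndep G J) :
    ∑ I ∈ indepSets G, lam ^ I.card * glauberP G lam I J = lam ^ J.card := by
  classical
  have h : ∀ I ∈ indepSets G,
      lam ^ I.card * glauberP G lam I J = lam ^ J.card * glauberP G lam J I := by
    intro I hI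
    exact glauberP_rev hlam (mem_indepSets_iff.1 hI) hJ
  rw [Finset.sum_congr rfl h, ← Finset.mul_sum, glauberP_row_sum hlam hV hJ, mul_one]

end ChainLemmas2
section ChainLemmas3
set_option linter.unusedSectionVars false
set_option maxHeartbeats 1000000

variable {V : Type*} [Fintype V] [DecidableEq V]

lemma stepDist_congr {G : SimpleGraph V} {lam : ℝ} {μ ν : Finset V → ℝ}
    (h : ∀ I ∈ indepSets G, μ I = ν I) : stepDist G lam μ = stepDist G lam ν := by
  funext J
  exact Finset.sum_congr rfl (fun I hI => by rw [h I hI])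

lemma stepDist_nonneg {G : SimpleGraph V} {lam : ℝ} (hlam : 0 ≤ lam) {μ : Finset V → ℝ}
    (hμ : ∀ I ∈ indepSets G, 0 ≤ μ I) (J : Finset V) : 0 ≤ stepDist G lam μ J :=
  Finset.sum_nonneg fun I hI => mul_nonneg (hμ I hI) (glauberP_nonneg hlam I J)

lemma stepDist_mass {G : SimpleGraph V} {lam : ℝ} (hlam : 0 ≤ lam)
    (hV : 0 < Fintype.card V) (μ : Finset V → ℝ) :
    ∑ J ∈ indepSets G, stepDist G lam μ J = ∑ I ∈ indepSets G, μ I := by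
  unfold stepDist
  rw [Finset.sum_comm]
  exact Finset.sum_congr rfl fun I hI => by
    rw [← Finset.mul_sum, glauberP_row_sum hlam hV (mem_indepSets_iff.1 hI), mul_one]

lemma stepDist_dominate {G : SimpleGraph V} {lam : ℝ} (hlam : 0 ≤ lam)
    (hV : 0 < Fintype.card V) {μ : Finset V → ℝ} {c : ℝ}
    (hμ : ∀ I ∈ indepSets G, μ I ≤ c * lam ^ I.card) :
    ∀ J ∈ indepSets G, stepDist G lam μ J ≤ c * lam ^ J.card := by
  intro J hJ
  calc stepDist G lam μ J = ∑ I ∈ indepSets G, μ I * glauberP G lam I J := rfl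
    _ ≤ ∑ I ∈ indepSets G, c * lam ^ I.card * glauberP G lam I J :=
        Finset.sum_le_sum fun I hI =>
          mul_le_mul_of_nonneg_right (hμ I hI) (glauberP_nonneg hlam I J)
    _ = c * ∑ I ∈ indepSets G, lam ^ I.card * glauberP G lam I J := by
        rw [Finset.mul_sum]; exact Finset.sum_congr rfl fun I _ => by ring
    _ = c * lam ^ J.card := by
        rw [glauberP_stationary hlam hV (mem_indepSets_iff.1 hJ)]

lemma distAfter_succ {G : SimpleGraph V} {lam : ℝ} (I : Finset V) (s : ℕ) :
    distAfter G lam I (s + 1) = stepDist G lam (distAfter G lam I s) := by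
  unfold distAfter
  rw [Function.iterate_succ_apply']

lemma distAfter_nonneg {G : SimpleGraph V} {lam : ℝ} (hlam : 0 ≤ lam) (I : Finset V) :
    ∀ s, ∀ J, 0 ≤ distAfter G lam I s J := by
  intro s
  induction s with
  | zero => intro J; unfold distAfter; simp only [Function.iterate_zero, id]; split_ifs <;> norm_num
  | succ s ih =>
      intro J
      rw [distAfter_succ]
      exact stepDist_nonneg hlam (fun K _ => ih K) J

lemma distAfter_mass {G : SimpleGraph V} {lam : ℝ} (hlam : 0 ≤ lam)
    (hV : 0 < Fintype.card V) {I : Finset V} (hI : I ∈ indepSets G) :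
    ∀ s, ∑ J ∈ indepSets G, distAfter G lam I s J = 1 := by
  intro s
  induction s with
  | zero =>
      unfold distAfter
      simp only [Function.iterate_zero, id]
      rw [Finset.sum_ite_eq' (indepSets G) I (fun _ => (1:ℝ))]
      exact if_pos hI
  | succ s ih => rw [distAfter_succ, stepDist_mass hlam hV, ih]

lemma iterate_linear {G : SimpleGraph V} {lam : ℝ} (hlam : 0 ≤ lam) :
    ∀ (s : ℕ) (μ : Finset V → ℝ) (J : Finset V), J ∈ indepSets G →
      (stepDist G lam)^[s] μ J = ∑ I ∈ indepSets G, μ I * distAfter G lam I s J := by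
  intro s
  induction s with
  | zero =>
      intro μ J hJ
      simp only [Function.iterate_zero, id]
      unfold distAfter
      simp only [Function.iterate_zero, id]
      rw [Finset.sum_congr rfl (fun I _ => by rw [mul_ite, mul_one, mul_zero]),
        Finset.sum_ite_eq (indepSets G) J μ]
      exact (if_pos hJ).symm
  | succ s ih =>
      intro μ J hJ
      rw [Function.iterate_succ_apply']
      calc stepDist G lam ((stepDist G lam)^[s] μ) J
          = ∑ K ∈ indepSets G, ((stepDist G lam)^[s] μ) K * glauberP G lam K J := rfl
        _ = ∑ K ∈ indepSets G, (∑ I ∈ indepSets G, μ I * distAfter G lam I s K)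
              * glauberP G lam K J :=
            Finset.sum_congr rfl fun K hK => by rw [ih μ K hK]
        _ = ∑ I ∈ indepSets G, μ I * distAfter G lam I (s+1) J := by
            rw [Finset.sum_congr rfl (fun K _ => Finset.sum_mul _ _ _), Finset.sum_comm]
            refine Finset.sum_congr rfl fun I _ => ?_
            rw [distAfter_succ]
            unfold stepDist
            rw [Finset.mul_sum]
            exact Finset.sum_congr rfl fun K _ => by ring

end ChainLemmas3
section ChainLemmas4
set_option linter.unusedSectionVars false
set_option maxHeartbeats 1000000

variable {V : Type*} [Fintype V] [DecidableEq V]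

open Classical in
noncomputable def gTerm (G : SimpleGraph V) (lam : ℝ) (I J : Finset V) (v : V) : ℝ :=
  if v ∈ I then
    (if J = I.erase v then 1 / (lam + 1) else if J = I then lam / (lam + 1) else 0)
  else if IsIndep G (insert v I) then
    (if J = insert v I then lam / (lam + 1) else if J = I then 1 / (lam + 1) else 0)
  else (if J = I then 1 else 0)

lemma glauberP_eq_gTerm (G : SimpleGraph V) (lam : ℝ) (I J : Finset V) :
    glauberP G lam I J = (1 / (Fintype.card V : ℝ)) * ∑ v : V, gTerm G lam I J v := rfl

lemma gTerm_nonneg {G : SimpleGraph V} {lam : ℝ} (hlam : 0 ≤ lam) (I J : Finset V) (v : V) :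
    0 ≤ gTerm G lam I J v := by
  have h1 : (0:ℝ) < lam + 1 := by linarith
  unfold gTerm
  split_ifs <;> positivity

lemma glauberP_ge_single {G : SimpleGraph V} {lam : ℝ} (hlam : 0 ≤ lam)
    (I J : Finset V) (v : V) :
    (1 / (Fintype.card V : ℝ)) * gTerm G lam I J v ≤ glauberP G lam I J := by
  rw [glauberP_eq_gTerm]
  have hn : (0:ℝ) ≤ (Fintype.card V : ℝ) := by positivity
  apply mul_le_mul_of_nonneg_left _ (by positivity)
  exact Finset.single_le_sum (fun w _ => gTerm_nonneg hlam I J w) (Finset.mem_univ v)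

lemma glauberP_ge_erase {G : SimpleGraph V} {lam : ℝ} (hlam : 1 ≤ lam)
    {I : Finset V} {v : V} (hv : v ∈ I) :
    1 / ((Fintype.card V : ℝ) * (lam + 1)) ≤ glauberP G lam I (I.erase v) := by
  have h := glauberP_ge_single (G := G) (lam := lam) (by linarith) I (I.erase v) v
  have : gTerm G lam I (I.erase v) v = 1 / (lam + 1) := by
    unfold gTerm
    rw [if_pos hv, if_pos rfl]
  rw [this] at h
  calc 1 / ((Fintype.card V : ℝ) * (lam + 1))
      = (1 / (Fintype.card V : ℝ)) * (1 / (lam + 1)) := by rw [one_div_mul_one_div]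
    _ ≤ _ := h

lemma glauberP_ge_insert {G : SimpleGraph V} {lam : ℝ} (hlam : 1 ≤ lam)
    {I : Finset V} {v : V} (hv : v ∉ I) (hind : IsIndep G (insert v I)) :
    1 / ((Fintype.card V : ℝ) * (lam + 1)) ≤ glauberP G lam I (insert v I) := by
  have h1 : (0:ℝ) < lam + 1 := by linarith
  have h := glauberP_ge_single (G := G) (lam := lam) (by linarith) I (insert v I) v
  have heq : gTerm G lam I (insert v I) v = lam / (lam + 1) := by
    unfold gTerm
    rw [if_neg hv, if_pos hind, if_pos rfl]
  rw [heq] at h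
  have h2 : (1:ℝ) / (lam + 1) ≤ lam / (lam + 1) := (div_le_div_iff_of_pos_right h1).mpr hlam
  calc 1 / ((Fintype.card V : ℝ) * (lam + 1))
      = (1 / (Fintype.card V : ℝ)) * (1 / (lam + 1)) := by rw [one_div_mul_one_div]
    _ ≤ (1 / (Fintype.card V : ℝ)) * (lam / (lam + 1)) := by
        apply mul_le_mul_of_nonneg_left h2 (by positivity)
    _ ≤ _ := h

lemma glauberP_ge_self {G : SimpleGraph V} {lam : ℝ} (hlam : 1 ≤ lam)
    (hV : 0 < Fintype.card V) (I : Finset V) :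
    1 / ((Fintype.card V : ℝ) * (lam + 1)) ≤ glauberP G lam I I := by
  have h1 : (0:ℝ) < lam + 1 := by linarith
  obtain ⟨v⟩ : Nonempty V := Fintype.card_pos_iff.1 hV
  have h := glauberP_ge_single (G := G) (lam := lam) (by linarith) I I v
  have heq : 1 / (lam + 1) ≤ gTerm G lam I I v := by
    unfold gTerm
    by_cases hv : v ∈ I
    · rw [if_pos hv, if_neg, if_pos rfl]
      · exact (div_le_div_iff_of_pos_right h1).mpr hlam
      · intro hh
        exact (Finset.notMem_erase v I) (hh ▸ hv)
    · rw [if_neg hv]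
      by_cases hind : IsIndep G (insert v I)
      · rw [if_pos hind, if_neg, if_pos rfl]
        intro hh
        exact hv (hh ▸ Finset.mem_insert_self v I)
      · rw [if_neg hind, if_pos rfl]
        rw [div_le_one h1]; linarith
  calc 1 / ((Fintype.card V : ℝ) * (lam + 1))
      = (1 / (Fintype.card V : ℝ)) * (1 / (lam + 1)) := by rw [one_div_mul_one_div]
    _ ≤ (1 / (Fintype.card V : ℝ)) * gTerm G lam I I v := by
        apply mul_le_mul_of_nonneg_left heq (by positivity)
    _ ≤ _ := h

end ChainLemmas4
section ChainLemmas5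
set_option linter.unusedSectionVars false
set_option maxHeartbeats 1000000

variable {V : Type*} [Fintype V] [DecidableEq V]

lemma eps_pos {lam : ℝ} (hlam : 1 ≤ lam) (hV : 0 < Fintype.card V) :
    0 < 1 / ((Fintype.card V : ℝ) * (lam + 1)) := by
  have h : (0:ℝ) < Fintype.card V := by exact_mod_cast hV
  have h1 : (0:ℝ) < lam + 1 := by linarith
  positivity

lemma stepDist_delta {G : SimpleGraph V} {lam : ℝ} {I : Finset V} (hI : I ∈ indepSets G)
    (K : Finset V) :
    stepDist G lam (fun J => if J = I then 1 else 0) K = glauberP G lam I K := by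
  classical
  unfold stepDist
  rw [Finset.sum_congr rfl (fun Y _ => by
    rw [ite_mul, one_mul, zero_mul]),
    Finset.sum_ite_eq' (indepSets G) I (fun Y => glauberP G lam Y K)]
  exact if_pos hI

lemma distAfter_front {G : SimpleGraph V} {lam : ℝ} (hlam : 0 ≤ lam)
    {I J : Finset V} (hI : I ∈ indepSets G) (hJ : J ∈ indepSets G) (s : ℕ) :
    distAfter G lam I (s + 1) J
      = ∑ K ∈ indepSets G, glauberP G lam I K * distAfter G lam K s J := by
  unfold distAfter
  rw [Function.iterate_succ_apply, iterate_linear hlam s _ J hJ]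
  exact Finset.sum_congr rfl fun K _ => by rw [stepDist_delta hI]; rfl

lemma distAfter_step_lower {G : SimpleGraph V} {lam : ℝ} (hlam : 0 ≤ lam)
    {I K J : Finset V} (hI : I ∈ indepSets G) (hK : K ∈ indepSets G) (hJ : J ∈ indepSets G)
    (s : ℕ) :
    glauberP G lam I K * distAfter G lam K s J ≤ distAfter G lam I (s + 1) J := by
  rw [distAfter_front hlam hI hJ]
  exact Finset.single_le_sum (fun Y _ => mul_nonneg (glauberP_nonneg hlam I Y)
    (distAfter_nonneg hlam Y s J)) hK

lemma distAfter_to_empty {G : SimpleGraph V} {lam : ℝ} (hlam : 1 ≤ lam)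
    (hV : 0 < Fintype.card V) :
    ∀ s : ℕ, ∀ I : Finset V, IsIndep G I → I.card ≤ s →
      (1 / ((Fintype.card V : ℝ) * (lam + 1))) ^ s ≤ distAfter G lam I s ∅ := by
  have h0 : (0:ℝ) ≤ lam := by linarith
  have heps : 0 < 1 / ((Fintype.card V : ℝ) * (lam + 1)) := eps_pos hlam hV
  intro s
  induction s with
  | zero =>
      intro I hI hcard
      have : I = ∅ := Finset.card_eq_zero.1 (Nat.le_zero.1 hcard)
      subst this
      unfold distAfter
      simp
  | succ s ih =>
      intro I hI hcard
      rcases Finset.eq_empty_or_nonempty I with rfl | ⟨v, hv⟩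
      · calc (1 / ((Fintype.card V : ℝ) * (lam + 1))) ^ (s+1)
            = (1 / ((Fintype.card V : ℝ) * (lam + 1)))
              * (1 / ((Fintype.card V : ℝ) * (lam + 1))) ^ s := by ring
          _ ≤ glauberP G lam ∅ ∅ * distAfter G lam ∅ s ∅ := by
              apply mul_le_mul (glauberP_ge_self hlam hV ∅)
                (ih ∅ (isIndep_empty G) (by simp)) (by positivity)
                (glauberP_nonneg h0 ∅ ∅)
          _ ≤ _ := distAfter_step_lower h0 (empty_mem_indepSets G) (empty_mem_indepSets G)
                (empty_mem_indepSets G) s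
      · have hKind : IsIndep G (I.erase v) := isIndep_subset (Finset.erase_subset v I) hI
        have hKcard : (I.erase v).card ≤ s := by
          rw [Finset.card_erase_of_mem hv]
          omega
        calc (1 / ((Fintype.card V : ℝ) * (lam + 1))) ^ (s+1)
            = (1 / ((Fintype.card V : ℝ) * (lam + 1)))
              * (1 / ((Fintype.card V : ℝ) * (lam + 1))) ^ s := by ring
          _ ≤ glauberP G lam I (I.erase v) * distAfter G lam (I.erase v) s ∅ := by
              apply mul_le_mul (glauberP_ge_erase hlam hv)
                (ih _ hKind hKcard) (by positivity) (glauberP_nonneg h0 _ _)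
          _ ≤ _ := distAfter_step_lower h0 (mem_indepSets_iff.2 hI)
                (mem_indepSets_iff.2 hKind) (empty_mem_indepSets G) s

lemma distAfter_from_subset {G : SimpleGraph V} {lam : ℝ} (hlam : 1 ≤ lam)
    (hV : 0 < Fintype.card V) :
    ∀ s : ℕ, ∀ I J : Finset V, IsIndep G J → I ⊆ J → J.card ≤ I.card + s →
      (1 / ((Fintype.card V : ℝ) * (lam + 1))) ^ s ≤ distAfter G lam I s J := by
  have h0 : (0:ℝ) ≤ lam := by linarith
  have heps : 0 < 1 / ((Fintype.card V : ℝ) * (lam + 1)) := eps_pos hlam hV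
  intro s
  induction s with
  | zero =>
      intro I J hJ hsub hcard
      have : I = J := Finset.eq_of_subset_of_card_le hsub (by omega)
      subst this
      unfold distAfter
      simp
  | succ s ih =>
      intro I J hJ hsub hcard
      have hIind : IsIndep G I := isIndep_subset hsub hJ
      rcases eq_or_ne I J with rfl | hne
      · calc (1 / ((Fintype.card V : ℝ) * (lam + 1))) ^ (s+1)
            = (1 / ((Fintype.card V : ℝ) * (lam + 1)))
              * (1 / ((Fintype.card V : ℝ) * (lam + 1))) ^ s := by ring
          _ ≤ glauberP G lam I I * distAfter G lam I s I := by
              apply mul_le_mul (glauberP_ge_self hlam hV I)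
                (ih I I hJ le_rfl (by omega)) (by positivity) (glauberP_nonneg h0 _ _)
          _ ≤ _ := distAfter_step_lower h0 (mem_indepSets_iff.2 hIind)
                (mem_indepSets_iff.2 hIind) (mem_indepSets_iff.2 hJ) s
      · have hss : I ⊂ J := HasSubset.Subset.ssubset_of_ne hsub hne
        obtain ⟨v, hvJ, hvI⟩ := Finset.exists_of_ssubset hss
        have hKsub : insert v I ⊆ J := Finset.insert_subset hvJ hsub
        have hKind : IsIndep G (insert v I) := isIndep_subset hKsub hJ
        have hKcard : J.card ≤ (insert v I).card + s := by
          rw [Finset.card_insert_of_notMem hvI]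
          omega
        calc (1 / ((Fintype.card V : ℝ) * (lam + 1))) ^ (s+1)
            = (1 / ((Fintype.card V : ℝ) * (lam + 1)))
              * (1 / ((Fintype.card V : ℝ) * (lam + 1))) ^ s := by ring
          _ ≤ glauberP G lam I (insert v I) * distAfter G lam (insert v I) s J := by
              apply mul_le_mul (glauberP_ge_insert hlam hvI hKind)
                (ih _ J hJ hKsub hKcard) (by positivity) (glauberP_nonneg h0 _ _)
          _ ≤ _ := distAfter_step_lower h0 (mem_indepSets_iff.2 hIind)
                (mem_indepSets_iff.2 hKind) (mem_indepSets_iff.2 hJ) s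

lemma distAfter_ge_delta {G : SimpleGraph V} {lam : ℝ} (hlam : 1 ≤ lam)
    (hV : 0 < Fintype.card V) {I J : Finset V}
    (hI : I ∈ indepSets G) (hJ : J ∈ indepSets G) :
    (1 / ((Fintype.card V : ℝ) * (lam + 1))) ^ (2 * Fintype.card V)
      ≤ distAfter G lam I (2 * Fintype.card V) J := by
  have h0 : (0:ℝ) ≤ lam := by linarith
  set n := Fintype.card V with hn
  have hsplit : distAfter G lam I (2 * n) J
      = ∑ K ∈ indepSets G, distAfter G lam I n K * distAfter G lam K n J := by
    have h2n : 2 * n = n + n := by ring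
    unfold distAfter
    rw [h2n, Function.iterate_add_apply, iterate_linear h0 n _ J hJ]
    rfl
  rw [hsplit]
  have hterm : (1 / ((Fintype.card V : ℝ) * (lam + 1))) ^ (2 * n)
      ≤ distAfter G lam I n ∅ * distAfter G lam ∅ n J := by
    have h1 : (1 / ((Fintype.card V : ℝ) * (lam + 1))) ^ n ≤ distAfter G lam I n ∅ :=
      distAfter_to_empty hlam hV n I (mem_indepSets_iff.1 hI)
        (by simpa [hn] using Finset.card_le_univ I)
    have h2 : (1 / ((Fintype.card V : ℝ) * (lam + 1))) ^ n ≤ distAfter G lam ∅ n J :=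
      distAfter_from_subset hlam hV n ∅ J (mem_indepSets_iff.1 hJ) (Finset.empty_subset J)
        (by simpa [hn] using Finset.card_le_univ J)
    calc (1 / ((Fintype.card V : ℝ) * (lam + 1))) ^ (2 * n)
        = (1 / ((Fintype.card V : ℝ) * (lam + 1))) ^ n
          * (1 / ((Fintype.card V : ℝ) * (lam + 1))) ^ n := by rw [two_mul, pow_add]
      _ ≤ _ := by
          apply mul_le_mul h1 h2 (by positivity) (distAfter_nonneg h0 I n ∅)
  refine le_trans hterm ?_
  exact Finset.single_le_sum (fun K _ => mul_nonneg (distAfter_nonneg h0 I n K)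
    (distAfter_nonneg h0 K n J)) (empty_mem_indepSets G)

end ChainLemmas5
section ChainLemmas6
set_option linter.unusedSectionVars false
set_option maxHeartbeats 1000000

variable {V : Type*} [Fintype V] [DecidableEq V]

lemma Z_pos {G : SimpleGraph V} {lam : ℝ} (hlam : 0 < lam) : 0 < Z G lam := by
  unfold Z
  apply Finset.sum_pos'
  · intro I _; positivity
  · exact ⟨∅, empty_mem_indepSets G, by positivity⟩

lemma hardCore_nonneg {G : SimpleGraph V} {lam : ℝ} (hlam : 0 < lam) (I : Finset V) :
    0 ≤ hardCore G lam I := by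
  unfold hardCore
  have := Z_pos (G := G) hlam
  positivity

lemma hardCore_mass {G : SimpleGraph V} {lam : ℝ} (hlam : 0 < lam) :
    ∑ I ∈ indepSets G, hardCore G lam I = 1 := by
  unfold hardCore
  rw [← Finset.sum_div]
  exact div_self (ne_of_gt (Z_pos hlam))

lemma iterate_hardCore {G : SimpleGraph V} {lam : ℝ} (hlam : 0 < lam)
    (hV : 0 < Fintype.card V) :
    ∀ s : ℕ, ∀ J ∈ indepSets G,
      (stepDist G lam)^[s] (hardCore G lam) J = hardCore G lam J := by
  have hstat : ∀ J ∈ indepSets G,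
      stepDist G lam (hardCore G lam) J = hardCore G lam J := by
    intro J hJ
    unfold stepDist hardCore
    rw [Finset.sum_congr rfl (fun I _ => div_mul_eq_mul_div _ _ _), ← Finset.sum_div,
      glauberP_stationary hlam.le hV (mem_indepSets_iff.1 hJ)]
  intro s
  induction s with
  | zero => intro J hJ; simp
  | succ s ih =>
      intro J hJ
      rw [Function.iterate_succ_apply']
      have : stepDist G lam ((stepDist G lam)^[s] (hardCore G lam))
          = stepDist G lam (hardCore G lam) := stepDist_congr ih
      rw [this]
      exact hstat J hJ

lemma pi_mix {G : SimpleGraph V} {lam : ℝ} (hlam : 0 < lam) (hV : 0 < Fintype.card V)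
    (s : ℕ) {J : Finset V} (hJ : J ∈ indepSets G) :
    ∑ I ∈ indepSets G, hardCore G lam I * distAfter G lam I s J = hardCore G lam J := by
  rw [← iterate_linear hlam.le s _ J hJ]
  exact iterate_hardCore hlam hV s J hJ

lemma tv_contract {G : SimpleGraph V} {lam : ℝ} (hlam : 1 ≤ lam)
    (hV : 0 < Fintype.card V) (μ : Finset V → ℝ)
    (hpos : ∀ I ∈ indepSets G, 0 ≤ μ I) (hmass : ∑ I ∈ indepSets G, μ I = 1) :
    tvDist G ((stepDist G lam)^[2 * Fintype.card V] μ) (hardCore G lam)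
      ≤ (1 - (1 / ((Fintype.card V : ℝ) * (lam + 1))) ^ (2 * Fintype.card V)
            * (indepSets G).card)
        * tvDist G μ (hardCore G lam) := by
  classical
  have hlam0 : (0:ℝ) < lam := by linarith
  set δ : ℝ := (1 / ((Fintype.card V : ℝ) * (lam + 1))) ^ (2 * Fintype.card V) with hδ
  set s := 2 * Fintype.card V with hs
  have key : ∀ J ∈ indepSets G,
      |(stepDist G lam)^[s] μ J - hardCore G lam J|
        ≤ ∑ I ∈ indepSets G, |μ I - hardCore G lam I| * (distAfter G lam I s J - δ) := by
    intro J hJ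
    have h1 : (stepDist G lam)^[s] μ J - hardCore G lam J
        = ∑ I ∈ indepSets G, (μ I - hardCore G lam I) * (distAfter G lam I s J - δ) := by
      rw [iterate_linear hlam0.le s μ J hJ]
      have : ∑ I ∈ indepSets G, (μ I - hardCore G lam I) * (distAfter G lam I s J - δ)
          = (∑ I ∈ indepSets G, μ I * distAfter G lam I s J)
            - (∑ I ∈ indepSets G, hardCore G lam I * distAfter G lam I s J)
            - δ * (∑ I ∈ indepSets G, μ I) + δ * (∑ I ∈ indepSets G, hardCore G lam I) := by
        rw [Finset.mul_sum, Finset.mul_sum, ← Finset.sum_sub_distrib, ← Finset.sum_sub_distrib,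
          ← Finset.sum_add_distrib]
        exact Finset.sum_congr rfl fun I _ => by ring
      rw [this, pi_mix hlam0 hV s hJ, hmass, hardCore_mass hlam0]
      ring
    rw [h1]
    refine le_trans (Finset.abs_sum_le_sum_abs _ _) ?_
    apply Finset.sum_le_sum
    intro I hI
    rw [abs_mul]
    apply mul_le_mul_of_nonneg_left _ (abs_nonneg _)
    rw [abs_of_nonneg]
    · exact sub_nonneg.2 (by rw [hδ, hs]; exact distAfter_ge_delta hlam hV hI hJ)
  unfold tvDist
  have hsum : ∑ J ∈ indepSets G, |(stepDist G lam)^[s] μ J - hardCore G lam J|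
      ≤ (1 - δ * (indepSets G).card) * ∑ I ∈ indepSets G, |μ I - hardCore G lam I| := by
    refine le_trans (Finset.sum_le_sum key) ?_
    rw [Finset.sum_comm]
    rw [Finset.mul_sum]
    apply Finset.sum_le_sum
    intro I hI
    rw [← Finset.mul_sum]
    have : ∑ J ∈ indepSets G, (distAfter G lam I s J - δ)
        = 1 - δ * (indepSets G).card := by
      rw [Finset.sum_sub_distrib, distAfter_mass hlam0.le hV hI, Finset.sum_const,
        nsmul_eq_mul, mul_comm]
    rw [this]
    exact le_of_eq (mul_comm _ _)
  calc (1:ℝ)/2 * ∑ J ∈ indepSets G, |(stepDist G lam)^[s] μ J - hardCore G lam J|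
      ≤ 1/2 * ((1 - δ * (indepSets G).card) * ∑ I ∈ indepSets G, |μ I - hardCore G lam I|) := by
        apply mul_le_mul_of_nonneg_left hsum (by norm_num)
    _ = (1 - δ * (indepSets G).card) * (1/2 * ∑ I ∈ indepSets G, |μ I - hardCore G lam I|) := by
        ring

end ChainLemmas6
section ChainLemmas7
set_option linter.unusedSectionVars false
set_option maxHeartbeats 1000000

variable {V : Type*} [Fintype V] [DecidableEq V]

lemma tv_le_one {G : SimpleGraph V} {lam : ℝ} (hlam0 : 0 < lam) {μ : Finset V → ℝ}
    (hpos : ∀ I ∈ indepSets G, 0 ≤ μ I) (hmass : ∑ I ∈ indepSets G, μ I = 1) :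
    tvDist G μ (hardCore G lam) ≤ 1 := by
  unfold tvDist
  have h : ∑ I ∈ indepSets G, |μ I - hardCore G lam I|
      ≤ ∑ I ∈ indepSets G, (μ I + hardCore G lam I) := by
    apply Finset.sum_le_sum
    intro I hI
    have h1 := hpos I hI
    have h2 := hardCore_nonneg (G := G) hlam0 I
    rw [abs_sub_le_iff]
    constructor <;> linarith
  rw [Finset.sum_add_distrib, hmass, hardCore_mass hlam0] at h
  linarith

lemma mixing_nonempty {G : SimpleGraph V} {lam : ℝ} (hlam : 1 ≤ lam)
    (hV : 0 < Fintype.card V) :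
    ∃ T : ℕ, ∀ I ∈ indepSets G,
      tvDist G (distAfter G lam I T) (hardCore G lam) ≤ 1/4 := by
  classical
  have hlam0 : (0:ℝ) < lam := by linarith
  set n := Fintype.card V with hn
  set δ : ℝ := (1 / ((n : ℝ) * (lam + 1))) ^ (2 * n) with hδ
  set ρ : ℝ := 1 - δ * (indepSets G).card with hρ
  have hδpos : 0 < δ := by
    rw [hδ]
    exact pow_pos (eps_pos hlam hV) _
  have hMpos : 0 < ((indepSets G).card : ℝ) := by
    have : ∅ ∈ indepSets G := empty_mem_indepSets G
    exact_mod_cast Finset.card_pos.2 ⟨∅, this⟩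
  have hρ1 : ρ < 1 := by
    rw [hρ]
    nlinarith
  have hρ0 : 0 ≤ ρ := by
    have hmass : ∑ J ∈ indepSets G, distAfter G lam ∅ (2 * n) J = 1 :=
      distAfter_mass hlam0.le hV (empty_mem_indepSets G) _
    have hge : ∑ J ∈ indepSets G, δ ≤ ∑ J ∈ indepSets G, distAfter G lam ∅ (2 * n) J := by
      apply Finset.sum_le_sum
      intro J hJ
      exact distAfter_ge_delta hlam hV (empty_mem_indepSets G) hJ
    rw [hmass, Finset.sum_const, nsmul_eq_mul, mul_comm] at hge
    rw [hρ]
    linarith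
  obtain ⟨k, hk⟩ := exists_pow_lt_of_lt_one (by norm_num : (0:ℝ) < 1/4) hρ1
  refine ⟨2 * n * k, ?_⟩
  intro I hI
  have main : ∀ j : ℕ, tvDist G (distAfter G lam I (2 * n * j)) (hardCore G lam) ≤ ρ ^ j := by
    intro j
    induction j with
    | zero =>
        simp only [Nat.mul_zero, pow_zero]
        apply tv_le_one hlam0 (fun J hJ => distAfter_nonneg hlam0.le I 0 J)
          (distAfter_mass hlam0.le hV hI 0)
    | succ j ih =>
        have hsplit : distAfter G lam I (2 * n * (j + 1))
            = (stepDist G lam)^[2 * n] (distAfter G lam I (2 * n * j)) := by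
          unfold distAfter
          rw [show 2 * n * (j + 1) = 2 * n + 2 * n * j by ring, Function.iterate_add_apply]
        rw [hsplit]
        calc tvDist G ((stepDist G lam)^[2 * n] (distAfter G lam I (2 * n * j)))
              (hardCore G lam)
            ≤ ρ * tvDist G (distAfter G lam I (2 * n * j)) (hardCore G lam) := by
              have := tv_contract hlam hV (distAfter G lam I (2 * n * j))
                (fun J _ => distAfter_nonneg hlam0.le I _ J)
                (distAfter_mass hlam0.le hV hI _)
              rw [hρ, hδ]
              exact this
          _ ≤ ρ * ρ ^ j := mul_le_mul_of_nonneg_left ih hρ0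
          _ = ρ ^ (j + 1) := by ring
  exact le_trans (main k) (le_of_lt hk)

lemma mixingTime_spec {G : SimpleGraph V} {lam : ℝ} (hlam : 1 ≤ lam)
    (hV : 0 < Fintype.card V) :
    ∀ I ∈ indepSets G,
      tvDist G (distAfter G lam I (mixingTime G lam)) (hardCore G lam) ≤ 1/4 := by
  have hne : {T : ℕ | ∀ I ∈ indepSets G,
      tvDist G (distAfter G lam I T) (hardCore G lam) ≤ 1/4}.Nonempty :=
    mixing_nonempty hlam hV
  exact Nat.sInf_mem hne

end ChainLemmas7
section Conductance
set_option linter.unusedSectionVars false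
set_option maxHeartbeats 2000000

variable {V : Type*} [Fintype V] [DecidableEq V]

lemma conductance_lower_bound {G : SimpleGraph V} {lam : ℝ} (hlam : 1 ≤ lam)
    (hV : 0 < Fintype.card V) {A : Finset (Finset V)} (hA : A ⊆ indepSets G)
    (hAne : A.Nonempty)
    (hpi : (∑ I ∈ A, lam ^ I.card) * 4 ≤ Z G lam) :
    ∑ I ∈ A, lam ^ I.card
      ≤ 2 * (mixingTime G lam : ℝ) *
        (∑ I ∈ A, lam ^ I.card * ∑ J ∈ indepSets G \ A, glauberP G lam I J) := by
  classical
  have hlam0 : (0:ℝ) < lam := by linarith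
  set wA : ℝ := ∑ I ∈ A, lam ^ I.card with hwAdef
  set Qf : ℝ := ∑ I ∈ A, lam ^ I.card * ∑ J ∈ indepSets G \ A, glauberP G lam I J with hQfdef
  have hwA : 0 < wA := Finset.sum_pos (fun I _ => by positivity) hAne
  have hQf0 : 0 ≤ Qf := Finset.sum_nonneg fun I _ => mul_nonneg (by positivity)
    (Finset.sum_nonneg fun J _ => glauberP_nonneg hlam0.le I J)
  set μ0 : Finset V → ℝ := fun J => if J ∈ A then lam ^ J.card / wA else 0 with hμ0
  -- basic facts about iterates of μ0
  have hpos : ∀ s, ∀ J, J ∈ indepSets G → 0 ≤ (stepDist G lam)^[s] μ0 J := by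
    intro s
    induction s with
    | zero =>
        intro J _
        simp only [Function.iterate_zero, id, hμ0]
        split_ifs <;> positivity
    | succ s ih =>
        intro J _
        rw [Function.iterate_succ_apply']
        exact stepDist_nonneg hlam0.le ih J
  have hdom : ∀ s, ∀ J ∈ indepSets G, (stepDist G lam)^[s] μ0 J ≤ (1/wA) * lam ^ J.card := by
    intro s
    induction s with
    | zero =>
        intro J _
        simp only [Function.iterate_zero, id, hμ0]
        split_ifs
        · rw [div_eq_mul_one_div, mul_comm]
        · positivity
    | succ s ih =>
        intro J hJ
        rw [Function.iterate_succ_apply']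
        exact stepDist_dominate hlam0.le hV ih J hJ
  have hmass : ∀ s, ∑ J ∈ indepSets G, (stepDist G lam)^[s] μ0 J = 1 := by
    intro s
    induction s with
    | zero =>
        simp only [Function.iterate_zero, id, hμ0]
        rw [Finset.sum_ite_mem, Finset.inter_eq_right.2 hA, ← Finset.sum_div]
        exact div_self (ne_of_gt hwA)
    | succ s ih =>
        rw [Function.iterate_succ_apply', stepDist_mass hlam0.le hV, ih]
  have hout : ∀ s : ℕ, ∑ J ∈ indepSets G \ A, (stepDist G lam)^[s] μ0 J
      ≤ (s : ℝ) * Qf / wA := by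
    intro s
    induction s with
    | zero =>
        simp only [Function.iterate_zero, id, hμ0, Nat.cast_zero, zero_mul, zero_div]
        apply le_of_eq
        apply Finset.sum_eq_zero
        intro J hJ
        rw [if_neg (Finset.mem_sdiff.1 hJ).2]
    | succ s ih =>
        have hswap : ∑ J ∈ indepSets G \ A, (stepDist G lam)^[s+1] μ0 J
            = ∑ I ∈ indepSets G, (stepDist G lam)^[s] μ0 I *
                ∑ J ∈ indepSets G \ A, glauberP G lam I J := by
          have e1 : ∀ J : Finset V, (stepDist G lam)^[s+1] μ0 J
              = ∑ I ∈ indepSets G, (stepDist G lam)^[s] μ0 I * glauberP G lam I J := by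
            intro J
            rw [Function.iterate_succ_apply']
            rfl
          rw [Finset.sum_congr rfl (fun J _ => e1 J), Finset.sum_comm]
          exact Finset.sum_congr rfl fun I _ => (Finset.mul_sum _ _ _).symm
        rw [hswap, ← Finset.sum_sdiff hA]
        have hb1 : ∑ I ∈ A, (stepDist G lam)^[s] μ0 I *
            ∑ J ∈ indepSets G \ A, glauberP G lam I J ≤ Qf / wA := by
          rw [hQfdef, Finset.sum_div]
          apply Finset.sum_le_sum
          intro I hI
          have h1 := hdom s I (hA hI)
          have h2 : (0:ℝ) ≤ ∑ J ∈ indepSets G \ A, glauberP G lam I J :=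
            Finset.sum_nonneg fun J _ => glauberP_nonneg hlam0.le I J
          calc (stepDist G lam)^[s] μ0 I * ∑ J ∈ indepSets G \ A, glauberP G lam I J
              ≤ (1/wA * lam ^ I.card) * ∑ J ∈ indepSets G \ A, glauberP G lam I J :=
                mul_le_mul_of_nonneg_right h1 h2
            _ = lam ^ I.card * (∑ J ∈ indepSets G \ A, glauberP G lam I J) / wA := by ring
        have hb2 : ∑ I ∈ indepSets G \ A, (stepDist G lam)^[s] μ0 I *
            ∑ J ∈ indepSets G \ A, glauberP G lam I J
            ≤ ∑ I ∈ indepSets G \ A, (stepDist G lam)^[s] μ0 I := by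
          apply Finset.sum_le_sum
          intro I hI
          have hImem : I ∈ indepSets G := (Finset.mem_sdiff.1 hI).1
          have hrow : ∑ J ∈ indepSets G \ A, glauberP G lam I J ≤ 1 := by
            rw [← glauberP_row_sum hlam0.le hV (mem_indepSets_iff.1 hImem)]
            apply Finset.sum_le_sum_of_subset_of_nonneg (Finset.sdiff_subset)
            intro J hJ _
            exact glauberP_nonneg hlam0.le I J
          calc (stepDist G lam)^[s] μ0 I * ∑ J ∈ indepSets G \ A, glauberP G lam I J
              ≤ (stepDist G lam)^[s] μ0 I * 1 :=
                mul_le_mul_of_nonneg_left hrow (hpos s I hImem)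
            _ = (stepDist G lam)^[s] μ0 I := mul_one _
        calc ∑ I ∈ indepSets G \ A, _ + ∑ I ∈ A, _
            ≤ (s : ℝ) * Qf / wA + Qf / wA := add_le_add (le_trans hb2 ih) hb1
          _ = ((s : ℝ) + 1) * Qf / wA := by ring
          _ = ((s + 1 : ℕ) : ℝ) * Qf / wA := by push_cast; ring
  -- the mixing time
  set T : ℕ := mixingTime G lam with hT
  have hspec := mixingTime_spec (G := G) hlam hV
  -- convexity upper bound on tv distance of μ_T
  have hμT : ∀ J ∈ indepSets G, (stepDist G lam)^[T] μ0 J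
      = ∑ I ∈ A, (lam ^ I.card / wA) * distAfter G lam I T J := by
    intro J hJ
    rw [iterate_linear hlam0.le T μ0 J hJ]
    rw [← Finset.sum_subset hA]
    · exact Finset.sum_congr rfl fun I hI => by rw [hμ0]; simp only [if_pos hI]
    · intro I hI hIA
      rw [hμ0]
      simp only [if_neg hIA, zero_mul]
  have htvle : tvDist G ((stepDist G lam)^[T] μ0) (hardCore G lam) ≤ 1/4 := by
    unfold tvDist
    have hcoef : ∑ I ∈ A, lam ^ I.card / wA = 1 := by
      rw [← Finset.sum_div]
      exact div_self (ne_of_gt hwA)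
    have hbound : ∑ J ∈ indepSets G, |(stepDist G lam)^[T] μ0 J - hardCore G lam J|
        ≤ ∑ J ∈ indepSets G, ∑ I ∈ A, (lam ^ I.card / wA) *
            |distAfter G lam I T J - hardCore G lam J| := by
      apply Finset.sum_le_sum
      intro J hJ
      rw [hμT J hJ]
      have : ∑ I ∈ A, (lam ^ I.card / wA) * (distAfter G lam I T J - hardCore G lam J)
          = ∑ I ∈ A, (lam ^ I.card / wA) * distAfter G lam I T J - hardCore G lam J := by
        have e : ∑ I ∈ A, (lam ^ I.card / wA) * (distAfter G lam I T J - hardCore G lam J)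
            = ∑ I ∈ A, ((lam ^ I.card / wA) * distAfter G lam I T J
                - (lam ^ I.card / wA) * hardCore G lam J) :=
          Finset.sum_congr rfl fun I _ => mul_sub _ _ _
        rw [e, Finset.sum_sub_distrib, ← Finset.sum_mul, hcoef, one_mul]
      rw [← this]
      refine le_trans (Finset.abs_sum_le_sum_abs _ _) ?_
      apply Finset.sum_le_sum
      intro I hI
      rw [abs_mul, abs_of_nonneg (by positivity : (0:ℝ) ≤ lam ^ I.card / wA)]
    rw [Finset.sum_comm] at hbound
    have hfinal : ∑ I ∈ A, ∑ J ∈ indepSets G, (lam ^ I.card / wA) *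
        |distAfter G lam I T J - hardCore G lam J| ≤ 1/2 := by
      have : ∀ I ∈ A, ∑ J ∈ indepSets G, (lam ^ I.card / wA) *
          |distAfter G lam I T J - hardCore G lam J| ≤ (lam ^ I.card / wA) * (1/2) := by
        intro I hI
        rw [← Finset.mul_sum]
        apply mul_le_mul_of_nonneg_left _ (by positivity)
        have := hspec I (hA hI)
        unfold tvDist at this
        linarith
      refine le_trans (Finset.sum_le_sum this) ?_
      rw [← Finset.sum_mul, hcoef, one_mul]
    linarith
  -- lower bound on tv distance
  have hpiA : ∑ I ∈ A, hardCore G lam I ≤ 1/4 := by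
    unfold hardCore
    rw [← Finset.sum_div]
    rw [div_le_iff₀ (Z_pos hlam0)]
    calc wA = wA := rfl
      _ ≤ Z G lam / 4 := by linarith
      _ = 1/4 * Z G lam := by ring
  have hmassT := hmass T
  have houtT := hout T
  have hsA : ∑ I ∈ A, ((stepDist G lam)^[T] μ0 I - hardCore G lam I)
      ≤ tvDist G ((stepDist G lam)^[T] μ0) (hardCore G lam) := by
    unfold tvDist
    have hsplit : ∑ J ∈ indepSets G, |(stepDist G lam)^[T] μ0 J - hardCore G lam J|
        = ∑ J ∈ indepSets G \ A, |(stepDist G lam)^[T] μ0 J - hardCore G lam J|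
          + ∑ J ∈ A, |(stepDist G lam)^[T] μ0 J - hardCore G lam J| :=
      (Finset.sum_sdiff hA).symm
    have h1 : ∑ I ∈ A, ((stepDist G lam)^[T] μ0 I - hardCore G lam I)
        ≤ ∑ J ∈ A, |(stepDist G lam)^[T] μ0 J - hardCore G lam J| :=
      Finset.sum_le_sum fun I _ => le_abs_self _
    have h2 : ∑ I ∈ A, ((stepDist G lam)^[T] μ0 I - hardCore G lam I)
        ≤ ∑ J ∈ indepSets G \ A, |(stepDist G lam)^[T] μ0 J - hardCore G lam J| := by
      have hzero : ∑ I ∈ A, ((stepDist G lam)^[T] μ0 I - hardCore G lam I)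
          + ∑ J ∈ indepSets G \ A, ((stepDist G lam)^[T] μ0 J - hardCore G lam J) = 0 := by
        rw [Finset.sum_sub_distrib, Finset.sum_sub_distrib]
        have e1 : ∑ I ∈ A, (stepDist G lam)^[T] μ0 I
            + ∑ J ∈ indepSets G \ A, (stepDist G lam)^[T] μ0 J = 1 := by
          rw [add_comm, Finset.sum_sdiff hA, hmassT]
        have e2 : ∑ I ∈ A, hardCore G lam I
            + ∑ J ∈ indepSets G \ A, hardCore G lam J = 1 := by
          rw [add_comm, Finset.sum_sdiff hA, hardCore_mass hlam0]
        linarith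
      have habs : -∑ J ∈ indepSets G \ A, ((stepDist G lam)^[T] μ0 J - hardCore G lam J)
          ≤ ∑ J ∈ indepSets G \ A, |(stepDist G lam)^[T] μ0 J - hardCore G lam J| := by
        rw [← Finset.sum_neg_distrib]
        exact Finset.sum_le_sum fun J _ => neg_le_abs _
      linarith
    rw [hsplit]
    linarith
  -- putting it all together
  have hμTA : 1 - (T : ℝ) * Qf / wA ≤ ∑ I ∈ A, (stepDist G lam)^[T] μ0 I := by
    have : ∑ I ∈ A, (stepDist G lam)^[T] μ0 I
        = 1 - ∑ J ∈ indepSets G \ A, (stepDist G lam)^[T] μ0 J := by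
      rw [← hmassT, ← Finset.sum_sdiff hA]
      ring
    rw [this]
    linarith
  have hkey : 1 - (T : ℝ) * Qf / wA - 1/4 ≤ 1/4 := by
    have := le_trans hsA htvle
    have hAsum : ∑ I ∈ A, ((stepDist G lam)^[T] μ0 I - hardCore G lam I)
        = ∑ I ∈ A, (stepDist G lam)^[T] μ0 I - ∑ I ∈ A, hardCore G lam I :=
      Finset.sum_sub_distrib _ _
    rw [hAsum] at this
    linarith
  have hTQ : wA / 2 ≤ (T : ℝ) * Qf := by
    have h1 : (1:ℝ)/2 ≤ (T : ℝ) * Qf / wA := by linarith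
    calc wA / 2 = (1/2) * wA := by ring
      _ ≤ ((T : ℝ) * Qf / wA) * wA := mul_le_mul_of_nonneg_right h1 hwA.le
      _ = (T : ℝ) * Qf := div_mul_cancel₀ _ (ne_of_gt hwA)
  calc wA ≤ 2 * ((T : ℝ) * Qf) := by linarith
    _ = 2 * (T : ℝ) * Qf := by ring

end Conductance
section Construction
set_option linter.unusedSectionVars false
set_option maxHeartbeats 2000000

/-- number of vertices: `t` cliques of size `2^k`, plus `t*(k+t+3)+2` extra vertices. -/
def nTot (t k : ℕ) : ℕ := t * 2^k + (t*(k+t+3)+2)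

/-- the graph: vertices `< t*2^k` form `t` cliques (blocks of size `2^k`), fully joined to
the remaining vertices, which form an independent set. -/
def HG (t k : ℕ) : SimpleGraph (Fin (nTot t k)) where
  Adj u v := u ≠ v ∧
    (((u:ℕ) < t*2^k ∧ (v:ℕ) < t*2^k ∧ (u:ℕ)/2^k = (v:ℕ)/2^k) ∨
     ((u:ℕ) < t*2^k ∧ ¬ (v:ℕ) < t*2^k) ∨ (¬ (u:ℕ) < t*2^k ∧ (v:ℕ) < t*2^k))
  symm := by
    constructor
    intro u v h
    obtain ⟨h1, h2⟩ := h
    exact ⟨h1.symm, by tauto⟩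
  loopless := by constructor; intro u h; exact h.1 rfl

variable {t k : ℕ}

lemma hg_adj {u v : Fin (nTot t k)} : (HG t k).Adj u v ↔ u ≠ v ∧
    (((u:ℕ) < t*2^k ∧ (v:ℕ) < t*2^k ∧ (u:ℕ)/2^k = (v:ℕ)/2^k) ∨
     ((u:ℕ) < t*2^k ∧ ¬ (v:ℕ) < t*2^k) ∨ (¬ (u:ℕ) < t*2^k ∧ (v:ℕ) < t*2^k)) := Iff.rfl

/-- the `W` side. -/
def Wfin (t k : ℕ) : Finset (Fin (nTot t k)) :=
  Finset.univ.filter fun u => (u:ℕ) < t*2^k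

/-- the `R` side. -/
def Rfin (t k : ℕ) : Finset (Fin (nTot t k)) :=
  Finset.univ.filter fun u => ¬ (u:ℕ) < t*2^k

lemma mem_Wfin {u : Fin (nTot t k)} : u ∈ Wfin t k ↔ (u:ℕ) < t*2^k := by
  simp [Wfin]

lemma mem_Rfin {u : Fin (nTot t k)} : u ∈ Rfin t k ↔ ¬ (u:ℕ) < t*2^k := by
  simp [Rfin]

lemma tm_le_nTot : t * 2^k ≤ nTot t k := Nat.le_add_right _ _

/-- the vertex `x` of block `i`. -/
def vtx (t k : ℕ) (i : Fin t) (x : Fin (2^k)) : Fin (nTot t k) :=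
  ⟨(i:ℕ) * 2^k + (x:ℕ), by
    have h1 : (i:ℕ) + 1 ≤ t := i.isLt
    have h2 : ((i:ℕ) + 1) * 2^k ≤ t * 2^k := Nat.mul_le_mul_right _ h1
    have h3 : (i:ℕ) * 2^k + (x:ℕ) < ((i:ℕ) + 1) * 2^k := by
      have := x.isLt
      calc (i:ℕ) * 2^k + (x:ℕ) < (i:ℕ) * 2^k + 2^k := by omega
        _ = ((i:ℕ) + 1) * 2^k := by ring
    exact lt_of_lt_of_le (lt_of_lt_of_le h3 h2) tm_le_nTot⟩

lemma vtx_val (i : Fin t) (x : Fin (2^k)) : ((vtx t k i x : Fin (nTot t k)) : ℕ)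
    = (i:ℕ) * 2^k + (x:ℕ) := rfl

lemma vtx_lt (i : Fin t) (x : Fin (2^k)) : ((vtx t k i x : Fin (nTot t k)) : ℕ) < t * 2^k := by
  have h1 : (i:ℕ) + 1 ≤ t := i.isLt
  have h2 : ((i:ℕ) + 1) * 2^k ≤ t * 2^k := Nat.mul_le_mul_right _ h1
  have h3 : (i:ℕ) * 2^k + (x:ℕ) < ((i:ℕ) + 1) * 2^k := by
    have := x.isLt
    calc (i:ℕ) * 2^k + (x:ℕ) < (i:ℕ) * 2^k + 2^k := by omega
      _ = ((i:ℕ) + 1) * 2^k := by ring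
  exact lt_of_lt_of_le h3 h2

lemma vtx_blk (i : Fin t) (x : Fin (2^k)) :
    ((vtx t k i x : Fin (nTot t k)) : ℕ) / 2^k = (i:ℕ) := by
  rw [vtx_val, Nat.add_comm, Nat.add_mul_div_right _ _ (Nat.two_pow_pos k),
    Nat.div_eq_of_lt x.isLt, Nat.zero_add]

lemma vtx_inj {i i' : Fin t} {x x' : Fin (2^k)} (h : vtx t k i x = vtx t k i' x') :
    i = i' ∧ x = x' := by
  have hval : (i:ℕ) * 2^k + (x:ℕ) = (i':ℕ) * 2^k + (x':ℕ) := by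
    have := congrArg (fun (u : Fin (nTot t k)) => (u:ℕ)) h
    simpa [vtx_val] using this
  have hblk : (i:ℕ) = (i':ℕ) := by
    have h1 := vtx_blk (t := t) (k := k) i x
    have h2 := vtx_blk (t := t) (k := k) i' x'
    rw [h] at h1
    omega
  constructor
  · exact Fin.ext hblk
  · apply Fin.ext
    rw [hblk] at hval
    omega

/-- the `j`-th vertex of the `R` side. -/
def rvtx (t k : ℕ) (j : Fin (t*(k+t+3)+2)) : Fin (nTot t k) :=
  ⟨t * 2^k + (j:ℕ), by
    have := j.isLt
    unfold nTot
    omega⟩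

lemma rvtx_val (j : Fin (t*(k+t+3)+2)) :
    ((rvtx t k j : Fin (nTot t k)) : ℕ) = t * 2^k + (j:ℕ) := rfl

lemma rvtx_not_lt (j : Fin (t*(k+t+3)+2)) :
    ¬ ((rvtx t k j : Fin (nTot t k)) : ℕ) < t * 2^k := by
  rw [rvtx_val]; omega

-- adjacency helper lemmas
lemma adj_WW {u v : Fin (nTot t k)} (hne : u ≠ v) (hu : (u:ℕ) < t*2^k)
    (hv : (v:ℕ) < t*2^k) (hblk : (u:ℕ)/2^k = (v:ℕ)/2^k) : (HG t k).Adj u v :=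
  hg_adj.2 ⟨hne, Or.inl ⟨hu, hv, hblk⟩⟩

lemma adj_WR {u v : Fin (nTot t k)} (hu : (u:ℕ) < t*2^k) (hv : ¬ (v:ℕ) < t*2^k) :
    (HG t k).Adj u v := by
  refine hg_adj.2 ⟨?_, Or.inr (Or.inl ⟨hu, hv⟩)⟩
  intro h
  rw [h] at hu
  exact hv hu

lemma not_adj_RR {u v : Fin (nTot t k)} (hu : ¬ (u:ℕ) < t*2^k) (hv : ¬ (v:ℕ) < t*2^k) :
    ¬ (HG t k).Adj u v := by
  intro h
  rcases hg_adj.1 h with ⟨_, h2⟩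
  tauto

lemma indep_of_subset_R {I : Finset (Fin (nTot t k))} (h : I ⊆ Rfin t k) :
    IsIndep (HG t k) I := by
  intro u hu v hv
  exact not_adj_RR (mem_Rfin.1 (h hu)) (mem_Rfin.1 (h hv))

lemma indep_subset_W {I : Finset (Fin (nTot t k))} (hI : IsIndep (HG t k) I)
    {u : Fin (nTot t k)} (hu : u ∈ I) (huW : (u:ℕ) < t*2^k) :
    ∀ v ∈ I, (v:ℕ) < t*2^k := by
  intro v hv
  by_contra hvR
  exact hI u hu v hv (adj_WR huW hvR)

lemma indep_blk_inj {I : Finset (Fin (nTot t k))} (hI : IsIndep (HG t k) I)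
    (hsub : I ⊆ Wfin t k) {u v : Fin (nTot t k)} (hu : u ∈ I) (hv : v ∈ I)
    (hblk : (u:ℕ)/2^k = (v:ℕ)/2^k) : u = v := by
  by_contra hne
  exact hI u hu v hv (adj_WW hne (mem_Wfin.1 (hsub hu)) (mem_Wfin.1 (hsub hv)) hblk)

lemma indep_W_card_le {I : Finset (Fin (nTot t k))} (hI : IsIndep (HG t k) I)
    (hsub : I ⊆ Wfin t k) : I.card ≤ t := by
  classical
  have hinj : Set.InjOn (fun u : Fin (nTot t k) => (u:ℕ)/2^k) I := by
    intro u hu v hv h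
    exact indep_blk_inj hI hsub hu hv h
  calc I.card = (I.image (fun u : Fin (nTot t k) => (u:ℕ)/2^k)).card :=
        (Finset.card_image_of_injOn hinj).symm
    _ ≤ (Finset.range t).card := by
        apply Finset.card_le_card
        intro b hb
        obtain ⟨u, hu, rfl⟩ := Finset.mem_image.1 hb
        rw [Finset.mem_range]
        have huW : (u:ℕ) < t * 2^k := mem_Wfin.1 (hsub hu)
        exact Nat.div_lt_of_lt_mul (by rwa [mul_comm] at huW)
    _ = t := Finset.card_range t

end Construction
section PathAlphaUpper
set_option linter.unusedSectionVars false
set_option maxHeartbeats 2000000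

variable {t k : ℕ}

lemma le_alphaOn {V : Type*} [Fintype V] [DecidableEq V] {G : SimpleGraph V}
    {S I : Finset V} (hI : I ∈ indepSets G) (hsub : I ⊆ S) :
    I.card ≤ alphaOn G S := by
  classical
  exact Finset.le_sup (Finset.mem_filter.2 ⟨hI, hsub⟩)

lemma good_decomp (ht : 1 ≤ t) :
    ∃ (p : ℕ) (X : Fin p → Finset (Fin (nTot t k))),
      IsPathDecomp (HG t k) p X ∧ ∀ i, alphaOn (HG t k) (X i) ≤ t := by
  classical
  refine ⟨t*(k+t+3)+2, fun j => Wfin t k ∪ {rvtx t k j}, ⟨?_, ?_, ?_⟩, ?_⟩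
  · -- coverage
    intro v
    by_cases hv : (v:ℕ) < t*2^k
    · exact ⟨⟨0, by omega⟩, Finset.mem_union_left _ (mem_Wfin.2 hv)⟩
    · have hlt : (v:ℕ) - t*2^k < t*(k+t+3)+2 := by
        have := v.isLt
        unfold nTot at this
        omega
      refine ⟨⟨(v:ℕ) - t*2^k, hlt⟩, Finset.mem_union_right _ ?_⟩
      rw [Finset.mem_singleton]
      apply Fin.ext
      rw [rvtx_val]
      simp only
      omega
  · -- edges
    intro u v hadj
    rcases hg_adj.1 hadj with ⟨hne, hcase⟩
    rcases hcase with ⟨hu, hv, _⟩ | ⟨hu, hv⟩ | ⟨hu, hv⟩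
    · exact ⟨⟨0, by omega⟩, Finset.mem_union_left _ (mem_Wfin.2 hu),
        Finset.mem_union_left _ (mem_Wfin.2 hv)⟩
    · have hlt : (v:ℕ) - t*2^k < t*(k+t+3)+2 := by
        have := v.isLt; unfold nTot at this; omega
      refine ⟨⟨(v:ℕ) - t*2^k, hlt⟩, Finset.mem_union_left _ (mem_Wfin.2 hu),
        Finset.mem_union_right _ ?_⟩
      rw [Finset.mem_singleton]
      apply Fin.ext
      rw [rvtx_val]
      simp only
      omega
    · have hlt : (u:ℕ) - t*2^k < t*(k+t+3)+2 := by
        have := u.isLt; unfold nTot at this; omega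
      refine ⟨⟨(u:ℕ) - t*2^k, hlt⟩, Finset.mem_union_right _ ?_,
        Finset.mem_union_left _ (mem_Wfin.2 hv)⟩
      rw [Finset.mem_singleton]
      apply Fin.ext
      rw [rvtx_val]
      simp only
      omega
  · -- interval property
    intro v i j k' hij hjk hvi hvk
    by_cases hv : (v:ℕ) < t*2^k
    · exact Finset.mem_union_left _ (mem_Wfin.2 hv)
    · have hi : v = rvtx t k i := by
        rcases Finset.mem_union.1 hvi with h | h
        · exact absurd (mem_Wfin.1 h) hv
        · exact Finset.mem_singleton.1 h
      have hk : v = rvtx t k k' := by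
        rcases Finset.mem_union.1 hvk with h | h
        · exact absurd (mem_Wfin.1 h) hv
        · exact Finset.mem_singleton.1 h
      have hik : i = k' := by
        apply Fin.ext
        have h1 : ((rvtx t k i : Fin (nTot t k)) : ℕ) = ((rvtx t k k' : Fin (nTot t k)) : ℕ) := by
          rw [← hi, ← hk]
        rw [rvtx_val, rvtx_val] at h1
        omega
      have hji : j = i := by
        apply le_antisymm _ hij
        rw [hik]
        exact hjk
      rw [hji]
      exact hvi
  · -- all bags have small independence number
    intro j
    apply Finset.sup_le
    intro I hI
    rw [Finset.mem_filter] at hI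
    obtain ⟨hIm, hIsub⟩ := hI
    have hind := mem_indepSets_iff.1 hIm
    by_cases hW : I ⊆ Wfin t k
    · exact indep_W_card_le hind hW
    · obtain ⟨u, hu, huW⟩ := Finset.not_subset.1 hW
      have hueq : u = rvtx t k j := by
        rcases Finset.mem_union.1 (hIsub hu) with h | h
        · exact absurd h huW
        · exact Finset.mem_singleton.1 h
      have hsub1 : I ⊆ {u} := by
        intro v hv
        rw [Finset.mem_singleton]
        rcases Finset.mem_union.1 (hIsub hv) with h | h
        · exfalso
          apply hind v hv u hu
          apply adj_WR (mem_Wfin.1 h)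
          rw [hueq]
          exact rvtx_not_lt j
        · rw [Finset.mem_singleton.1 h, hueq]
      calc I.card ≤ ({u} : Finset (Fin (nTot t k))).card := Finset.card_le_card hsub1
        _ = 1 := Finset.card_singleton u
        _ ≤ t := ht

lemma pathAlpha_le (ht : 1 ≤ t) : pathAlpha (HG t k) ≤ t := by
  obtain ⟨p, X, h1, h2⟩ := good_decomp (t := t) (k := k) ht
  exact Nat.sInf_le ⟨p, X, h1, h2⟩

end PathAlphaUpper
section PathAlphaLower
set_option linter.unusedSectionVars false
set_option maxHeartbeats 2000000

variable {t k : ℕ}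

lemma pathAlpha_ge (ht : 1 ≤ t) : t ≤ pathAlpha (HG t k) := by
  classical
  apply le_csInf
  · obtain ⟨p, X, h1, h2⟩ := good_decomp (t := t) (k := k) ht
    exact ⟨t, p, X, h1, h2⟩
  rintro kk ⟨p, X, ⟨hcov, hedge, hint⟩, hbag⟩
  have hx0 : (0:ℕ) < 2^k := Nat.two_pow_pos k
  set x0 : Fin (2^k) := ⟨0, hx0⟩ with hx0def
  set i0 : Fin t := ⟨0, ht⟩ with hi0def
  obtain ⟨ib, _⟩ := hcov (vtx t k i0 x0)
  haveI : Nonempty (Fin p) := ⟨ib⟩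
  set S : Fin (nTot t k) → Finset (Fin p) :=
    fun v => Finset.univ.filter (fun i => v ∈ X i) with hS
  have hSne : ∀ v, (S v).Nonempty := by
    intro v
    obtain ⟨i, hi⟩ := hcov v
    exact ⟨i, by simp [hS, hi]⟩
  set fst : Fin (nTot t k) → Fin p := fun v => (S v).min' (hSne v) with hfst
  set lst : Fin (nTot t k) → Fin p := fun v => (S v).max' (hSne v) with hlst
  have hmemS : ∀ (v : Fin (nTot t k)) (j : Fin p), v ∈ X j ↔ j ∈ S v := by
    intro v j
    simp [hS]
  have hfst_le : ∀ v j, v ∈ X j → fst v ≤ j :=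
    fun v j h => Finset.min'_le _ _ ((hmemS v j).1 h)
  have hle_lst : ∀ v j, v ∈ X j → j ≤ lst v :=
    fun v j h => Finset.le_max' _ _ ((hmemS v j).1 h)
  have hmem : ∀ (v : Fin (nTot t k)) (j : Fin p), fst v ≤ j → j ≤ lst v → v ∈ X j := by
    intro v j h1 h2
    exact hint v (fst v) j (lst v) h1 h2 ((hmemS v _).2 (Finset.min'_mem _ _))
      ((hmemS v _).2 (Finset.max'_mem _ _))
  have hfl : ∀ v, fst v ≤ lst v := fun v => Finset.min'_le _ _ (Finset.max'_mem _ _)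
  have hadj_bag : ∀ u v, (HG t k).Adj u v →
      ∃ j, fst u ≤ j ∧ j ≤ lst u ∧ fst v ≤ j ∧ j ≤ lst v := by
    intro u v h
    obtain ⟨j, h1, h2⟩ := hedge u v h
    exact ⟨j, hfst_le u j h1, hle_lst u j h1, hfst_le v j h2, hle_lst v j h2⟩
  have hxne : (Finset.univ : Finset (Fin (2^k))).Nonempty := ⟨x0, Finset.mem_univ x0⟩
  set a : Fin t → Fin p := fun i => Finset.univ.sup' hxne (fun x => fst (vtx t k i x)) with ha
  set b : Fin t → Fin p := fun i => Finset.univ.inf' hxne (fun x => lst (vtx t k i x)) with hb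
  have hblock : ∀ (i : Fin t) (j : Fin p), a i ≤ j → j ≤ b i →
      ∀ x, vtx t k i x ∈ X j := by
    intro i j h1 h2 x
    apply hmem
    · exact le_trans (Finset.le_sup' (fun x => fst (vtx t k i x)) (Finset.mem_univ x)) h1
    · exact le_trans h2 (Finset.inf'_le (fun x => lst (vtx t k i x)) (Finset.mem_univ x))
  have hab : ∀ i, a i ≤ b i := by
    intro i
    obtain ⟨xa, _, hxa⟩ := Finset.exists_mem_eq_sup' hxne (fun x => fst (vtx t k i x))
    obtain ⟨xb, _, hxb⟩ := Finset.exists_mem_eq_inf' hxne (fun x => lst (vtx t k i x))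
    rcases eq_or_ne xa xb with heq | hne
    · show (Finset.univ.sup' hxne fun x => fst (vtx t k i x))
        ≤ Finset.univ.inf' hxne fun x => lst (vtx t k i x)
      rw [hxa, hxb, heq]
      exact hfl _
    · have hadj : (HG t k).Adj (vtx t k i xa) (vtx t k i xb) := by
        apply adj_WW
        · intro h
          exact hne (vtx_inj h).2
        · exact vtx_lt i xa
        · exact vtx_lt i xb
        · rw [vtx_blk, vtx_blk]
      obtain ⟨j, h1, h2, h3, h4⟩ := hadj_bag _ _ hadj
      show (Finset.univ.sup' hxne fun x => fst (vtx t k i x))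
        ≤ Finset.univ.inf' hxne fun x => lst (vtx t k i x)
      rw [hxa, hxb]
      exact le_trans h1 h4
  have hRa : ∀ u : Fin (nTot t k), ¬ (u:ℕ) < t*2^k → ∀ i, a i ≤ lst u := by
    intro u hu i
    obtain ⟨xa, _, hxa⟩ := Finset.exists_mem_eq_sup' hxne (fun x => fst (vtx t k i x))
    have hadj : (HG t k).Adj (vtx t k i xa) u := adj_WR (vtx_lt i xa) hu
    obtain ⟨j, h1, h2, h3, h4⟩ := hadj_bag _ _ hadj
    show (Finset.univ.sup' hxne fun x => fst (vtx t k i x)) ≤ lst u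
    rw [hxa]
    exact le_trans h1 h4
  have hRb : ∀ u : Fin (nTot t k), ¬ (u:ℕ) < t*2^k → ∀ i, fst u ≤ b i := by
    intro u hu i
    obtain ⟨xb, _, hxb⟩ := Finset.exists_mem_eq_inf' hxne (fun x => lst (vtx t k i x))
    have hadj : (HG t k).Adj u (vtx t k i xb) := ((adj_WR (vtx_lt i xb) hu)).symm
    obtain ⟨j, h1, h2, h3, h4⟩ := hadj_bag _ _ hadj
    show fst u ≤ Finset.univ.inf' hxne fun x => lst (vtx t k i x)
    rw [hxb]
    exact le_trans h1 h4
  by_cases hcase : ∀ i j : Fin t, a i ≤ b j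
  · have htne : (Finset.univ : Finset (Fin t)).Nonempty := ⟨i0, Finset.mem_univ i0⟩
    obtain ⟨im, _, him⟩ := Finset.exists_mem_eq_sup' htne a
    set js : Fin p := Finset.univ.sup' htne a with hjs
    have hS0 : ∀ i : Fin t, vtx t k i x0 ∈ X js := by
      intro i
      apply hblock i js
      · exact Finset.le_sup' a (Finset.mem_univ i)
      · rw [him]
        exact hcase im i
    set S0 : Finset (Fin (nTot t k)) := Finset.univ.image (fun i : Fin t => vtx t k i x0)
      with hS0def
    have hS0sub : S0 ⊆ X js := by
      intro u hu
      obtain ⟨i, _, rfl⟩ := Finset.mem_image.1 hu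
      exact hS0 i
    have hS0ind : IsIndep (HG t k) S0 := by
      intro u hu v hv
      obtain ⟨i, _, rfl⟩ := Finset.mem_image.1 hu
      obtain ⟨i', _, rfl⟩ := Finset.mem_image.1 hv
      intro hadj
      rcases hg_adj.1 hadj with ⟨hne, hcase2⟩
      rcases hcase2 with ⟨_, _, hblk⟩ | ⟨_, h2⟩ | ⟨h1, _⟩
      · rw [vtx_blk, vtx_blk] at hblk
        have : i = i' := Fin.ext hblk
        rw [this] at hne
        exact hne rfl
      · exact h2 (vtx_lt i' x0)
      · exact h1 (vtx_lt i x0)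
    have hS0card : S0.card = t := by
      rw [hS0def, Finset.card_image_of_injective _ (fun i i' h => (vtx_inj h).1),
        Finset.card_univ, Fintype.card_fin]
    calc t = S0.card := hS0card.symm
      _ ≤ alphaOn (HG t k) (X js) := le_alphaOn (mem_indepSets_iff.2 hS0ind) hS0sub
      _ ≤ kk := hbag js
  · push_neg at hcase
    obtain ⟨i1, j1, hlt⟩ := hcase
    have hRin : ∀ u : Fin (nTot t k), ¬ (u:ℕ) < t*2^k → u ∈ X (b j1) := by
      intro u hu
      apply hmem
      · exact hRb u hu j1
      · exact le_trans (le_of_lt hlt) (hRa u hu i1)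
    have htle : t ≤ t*(k+t+3)+2 := by
      have h1 : t * 1 ≤ t*(k+t+3) := Nat.mul_le_mul_left t (by omega)
      omega
    set emb : Fin t → Fin (nTot t k) := fun i => rvtx t k ⟨(i:ℕ), lt_of_lt_of_le i.isLt htle⟩
      with hemb
    set S1 : Finset (Fin (nTot t k)) := Finset.univ.image emb with hS1def
    have hS1R : ∀ u ∈ S1, ¬ (u:ℕ) < t*2^k := by
      intro u hu
      obtain ⟨i, _, rfl⟩ := Finset.mem_image.1 hu
      exact rvtx_not_lt _
    have hS1sub : S1 ⊆ X (b j1) := fun u hu => hRin u (hS1R u hu)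
    have hS1ind : IsIndep (HG t k) S1 :=
      indep_of_subset_R (fun u hu => mem_Rfin.2 (hS1R u hu))
    have hS1card : S1.card = t := by
      rw [hS1def, Finset.card_image_of_injective, Finset.card_univ, Fintype.card_fin]
      intro i i' h
      have hval := congrArg (fun u : Fin (nTot t k) => (u:ℕ)) h
      simp only [hemb, rvtx_val] at hval
      exact Fin.ext (by omega)
    calc t = S1.card := hS1card.symm
      _ ≤ alphaOn (HG t k) (X (b j1)) := le_alphaOn (mem_indepSets_iff.2 hS1ind) hS1sub
      _ ≤ kk := hbag (b j1)

lemma pathAlpha_eq (ht : 1 ≤ t) : pathAlpha (HG t k) = t :=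
  le_antisymm (pathAlpha_le ht) (pathAlpha_ge ht)

end PathAlphaLower
section Weights
set_option linter.unusedSectionVars false
set_option maxHeartbeats 4000000

open Classical in
/-- the bottleneck set: nonempty independent subsets of `W`. -/
noncomputable def Aset (t k : ℕ) : Finset (Finset (Fin (nTot t k))) :=
  (indepSets (HG t k)).filter fun I => I.Nonempty ∧ I ⊆ Wfin t k

variable {t k : ℕ}

lemma mem_Aset {I : Finset (Fin (nTot t k))} :
    I ∈ Aset t k ↔ IsIndep (HG t k) I ∧ I.Nonempty ∧ I ⊆ Wfin t k := by
  classical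
  unfold Aset
  rw [Finset.mem_filter, mem_indepSets_iff]

lemma Aset_subset : Aset t k ⊆ indepSets (HG t k) := Finset.filter_subset _ _

lemma isIndep_singleton {V : Type*} [Fintype V] [DecidableEq V] (G : SimpleGraph V) (v : V) :
    IsIndep G ({v} : Finset V) := by
  intro u hu w hw
  rw [Finset.mem_singleton] at hu hw
  subst hu; subst hw
  exact G.irrefl

lemma Aset_nonempty (ht : 1 ≤ t) : (Aset t k).Nonempty := by
  have hx0 : (0:ℕ) < 2^k := Nat.two_pow_pos k
  refine ⟨{vtx t k ⟨0, ht⟩ ⟨0, hx0⟩}, mem_Aset.2 ⟨isIndep_singleton _ _, ⟨_, Finset.mem_singleton_self _⟩, ?_⟩⟩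
  intro u hu
  rw [Finset.mem_singleton] at hu
  subst hu
  exact mem_Wfin.2 (vtx_lt _ _)

/-- lower bound on the weight of `A` via transversals. -/
lemma wA_lower {lam : ℝ} (hlam : 1 ≤ lam) (ht : 1 ≤ t) :
    ((2^k : ℝ) * lam) ^ t ≤ ∑ I ∈ Aset t k, lam ^ I.card := by
  classical
  have hlam0 : (0:ℝ) < lam := by linarith
  set Tmap : (Fin t → Fin (2^k)) → Finset (Fin (nTot t k)) :=
    fun f => Finset.univ.image (fun i : Fin t => vtx t k i (f i)) with hTmap
  have hmem : ∀ f, Tmap f ∈ Aset t k := by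
    intro f
    refine mem_Aset.2 ⟨?_, ?_, ?_⟩
    · intro u hu v hv
      obtain ⟨i, _, rfl⟩ := Finset.mem_image.1 hu
      obtain ⟨i', _, rfl⟩ := Finset.mem_image.1 hv
      intro hadj
      rcases hg_adj.1 hadj with ⟨hne, hcase2⟩
      rcases hcase2 with ⟨_, _, hblk⟩ | ⟨_, h2⟩ | ⟨h1, _⟩
      · rw [vtx_blk, vtx_blk] at hblk
        have : i = i' := Fin.ext hblk
        rw [this] at hne
        exact hne rfl
      · exact h2 (vtx_lt _ _)
      · exact h1 (vtx_lt _ _)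
    · exact ⟨vtx t k ⟨0, ht⟩ (f ⟨0, ht⟩), Finset.mem_image.2 ⟨⟨0, ht⟩, Finset.mem_univ _, rfl⟩⟩
    · intro u hu
      obtain ⟨i, _, rfl⟩ := Finset.mem_image.1 hu
      exact mem_Wfin.2 (vtx_lt _ _)
  have hcard : ∀ f, (Tmap f).card = t := by
    intro f
    rw [hTmap]
    rw [Finset.card_image_of_injective _ (fun i i' h => (vtx_inj h).1),
      Finset.card_univ, Fintype.card_fin]
  have hinj : ∀ f ∈ (Finset.univ : Finset (Fin t → Fin (2^k))),
      ∀ f' ∈ Finset.univ, Tmap f = Tmap f' → f = f' := by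
    intro f _ f' _ h
    funext i
    have h1 : vtx t k i (f i) ∈ Tmap f' := by
      rw [← h, hTmap]
      exact Finset.mem_image.2 ⟨i, Finset.mem_univ _, rfl⟩
    obtain ⟨i', _, heq⟩ := Finset.mem_image.1 h1
    obtain ⟨hi, hx⟩ := vtx_inj heq
    rw [hi] at hx
    exact hx.symm
  calc ((2^k : ℝ) * lam) ^ t = (2^k : ℝ)^t * lam^t := mul_pow _ _ _
    _ = (Fintype.card (Fin t → Fin (2^k)) : ℝ) * lam^t := by
        rw [Fintype.card_fun, Fintype.card_fin, Fintype.card_fin]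
        push_cast
        ring
    _ = ∑ f : Fin t → Fin (2^k), lam ^ (Tmap f).card := by
        rw [Finset.sum_congr rfl (fun f _ => by rw [hcard f]), Finset.sum_const,
          Finset.card_univ, nsmul_eq_mul]
    _ = ∑ I ∈ Finset.univ.image Tmap, lam ^ I.card := by rw [Finset.sum_image hinj]
    _ ≤ ∑ I ∈ Aset t k, lam ^ I.card := by
        apply Finset.sum_le_sum_of_subset_of_nonneg
        · intro I hI
          obtain ⟨f, _, rfl⟩ := Finset.mem_image.1 hI
          exact hmem f
        · intro I _ _
          positivity

/-- upper bound on the weight of `A`. -/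
lemma wA_upper {lam : ℝ} (hlam : 1 ≤ lam) :
    ∑ I ∈ Aset t k, lam ^ I.card ≤ ((nTot t k : ℝ) + 1) ^ t * lam ^ t := by
  classical
  have hlam0 : (0:ℝ) < lam := by linarith
  have hcard_le : ∀ I ∈ Aset t k, I.card ≤ t := by
    intro I hI
    obtain ⟨h1, _, h3⟩ := mem_Aset.1 hI
    exact indep_W_card_le h1 h3
  have step1 : ∑ I ∈ Aset t k, lam ^ I.card ≤ ((Aset t k).card : ℝ) * lam ^ t := by
    calc ∑ I ∈ Aset t k, lam ^ I.card ≤ ∑ _I ∈ Aset t k, lam ^ t :=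
          Finset.sum_le_sum fun I hI => pow_le_pow_right₀ hlam (hcard_le I hI)
      _ = ((Aset t k).card : ℝ) * lam ^ t := by rw [Finset.sum_const, nsmul_eq_mul]
  have hAcard : (Aset t k).card ≤ (nTot t k + 1) ^ t := by
    set φ : Finset (Fin (nTot t k)) → (Fin t → Option (Fin (nTot t k))) :=
      fun I => fun i => if h : (I.filter fun u : Fin (nTot t k) =>
          (u:ℕ)/2^k = (i:ℕ)).Nonempty
        then some ((I.filter fun u : Fin (nTot t k) => (u:ℕ)/2^k = (i:ℕ)).min' h) else none
      with hφ
    have hblt : ∀ I ∈ Aset t k, ∀ u ∈ I, (u:ℕ)/2^k < t := by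
      intro I hI u hu
      obtain ⟨_, _, h3⟩ := mem_Aset.1 hI
      have := mem_Wfin.1 (h3 hu)
      exact Nat.div_lt_of_lt_mul (by rwa [mul_comm] at this)
    have hkey : ∀ I ∈ Aset t k, ∀ u ∈ I, ∀ hlt : (u:ℕ)/2^k < t,
        φ I ⟨(u:ℕ)/2^k, hlt⟩ = some u := by
      intro I hI u hu hlt
      obtain ⟨h1, _, h3⟩ := mem_Aset.1 hI
      have hfil : (I.filter fun v : Fin (nTot t k) => (v:ℕ)/2^k = (u:ℕ)/2^k) = {u} := by
        apply Finset.eq_singleton_iff_unique_mem.2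
        constructor
        · exact Finset.mem_filter.2 ⟨hu, rfl⟩
        · intro v hv
          obtain ⟨hv1, hv2⟩ := Finset.mem_filter.1 hv
          exact indep_blk_inj h1 h3 hv1 hu hv2
      rw [hφ]
      simp only [hfil]
      rw [dif_pos ⟨u, Finset.mem_singleton_self u⟩]
      congr 1
    have hinj : Set.InjOn φ (Aset t k) := by
      intro I hI I' hI' heq
      have hdir : ∀ J J', J ∈ Aset t k → J' ∈ Aset t k → φ J = φ J' → J ⊆ J' := by
        intro J J' hJ hJ' he u hu
        have h1 := hkey J hJ u hu (hblt J hJ u hu)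
        rw [he] at h1
        by_cases h : (J'.filter fun v : Fin (nTot t k) =>
            (v:ℕ)/2^k = ((⟨(u:ℕ)/2^k, hblt J hJ u hu⟩ : Fin t) : ℕ)).Nonempty
        · rw [hφ] at h1
          simp only [dif_pos h] at h1
          have hm := Finset.min'_mem _ h
          rw [Option.some_inj.1 h1] at hm
          exact (Finset.mem_filter.1 hm).1
        · rw [hφ] at h1
          simp only [dif_neg h] at h1
          exact absurd h1 (by simp)
      exact Finset.Subset.antisymm (hdir I I' hI hI' heq) (hdir I' I hI' hI heq.symm)
    calc (Aset t k).card ≤ Fintype.card (Fin t → Option (Fin (nTot t k))) := by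
          apply Finset.card_le_card_of_injOn φ (fun I _ => Finset.mem_univ (φ I)) hinj
            |>.trans
          rw [Finset.card_univ]
      _ = (nTot t k + 1) ^ t := by
          rw [Fintype.card_fun, Fintype.card_option, Fintype.card_fin, Fintype.card_fin]
  calc ∑ I ∈ Aset t k, lam ^ I.card ≤ ((Aset t k).card : ℝ) * lam ^ t := step1
    _ ≤ ((nTot t k : ℝ) + 1) ^ t * lam ^ t := by
        apply mul_le_mul_of_nonneg_right _ (by positivity)
        calc ((Aset t k).card : ℝ) ≤ (((nTot t k + 1) ^ t : ℕ) : ℝ) := by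
              exact_mod_cast hAcard
          _ = ((nTot t k : ℝ) + 1) ^ t := by push_cast; ring

/-- lower bound on the partition function via subsets of `R`. -/
lemma Z_lower {lam : ℝ} (hlam : 1 ≤ lam) :
    (lam + 1) ^ (t*(k+t+3)+2) ≤ Z (HG t k) lam := by
  classical
  have hlam0 : (0:ℝ) < lam := by linarith
  have hRcard : (Rfin t k).card = t*(k+t+3)+2 := by
    have hR_eq : Rfin t k = Finset.univ.image (rvtx t k) := by
      ext u
      rw [mem_Rfin, Finset.mem_image]
      constructor
      · intro h
        have hlt : (u:ℕ) - t*2^k < t*(k+t+3)+2 := by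
          have := u.isLt
          unfold nTot at this
          omega
        refine ⟨⟨(u:ℕ) - t*2^k, hlt⟩, Finset.mem_univ _, ?_⟩
        apply Fin.ext
        rw [rvtx_val]
        simp only
        omega
      · rintro ⟨j, _, rfl⟩
        exact rvtx_not_lt j
    rw [hR_eq, Finset.card_image_of_injective, Finset.card_univ, Fintype.card_fin]
    intro j j' h
    have hval := congrArg (fun u : Fin (nTot t k) => (u:ℕ)) h
    simp only [rvtx_val] at hval
    exact Fin.ext (by omega)
  have hbinom : ∑ I ∈ (Rfin t k).powerset, lam ^ I.card = (lam + 1) ^ (t*(k+t+3)+2) := by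
    have := Finset.sum_pow_mul_eq_add_pow lam 1 (Rfin t k)
    simp only [one_pow, mul_one] at this
    rw [this, hRcard]
  rw [← hbinom]
  unfold Z
  apply Finset.sum_le_sum_of_subset_of_nonneg
  · intro I hI
    rw [Finset.mem_powerset] at hI
    apply mem_indepSets_iff.2
    apply indep_of_subset_R
    exact fun u hu => hI hu
  · intro I _ _
    positivity

end Weights
section QfBound
set_option linter.unusedSectionVars false
set_option maxHeartbeats 4000000

variable {t k : ℕ}

lemma nTot_pos : 0 < nTot t k := by unfold nTot; omega

lemma Qf_le_one {lam : ℝ} (hlam : 1 ≤ lam) (ht : 1 ≤ t) :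
    ∑ I ∈ Aset t k, lam ^ I.card *
      ∑ J ∈ indepSets (HG t k) \ Aset t k, glauberP (HG t k) lam I J ≤ 1 := by
  classical
  have hlam0 : (0:ℝ) < lam := by linarith
  have h1 : (0:ℝ) < lam + 1 := by linarith
  have hn : (0:ℝ) < (nTot t k : ℝ) := by exact_mod_cast nTot_pos (t := t) (k := k)
  set out : Finset (Finset (Fin (nTot t k))) := indepSets (HG t k) \ Aset t k with hout
  have hperI : ∀ I ∈ Aset t k, lam ^ I.card * ∑ J ∈ out, glauberP (HG t k) lam I J
      ≤ ∑ v : Fin (nTot t k), (if I = {v} then lam/((nTot t k : ℝ)*(lam+1)) else 0) := by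
    intro I hI
    obtain ⟨hind, hne, hsubW⟩ := mem_Aset.1 hI
    have houtI : I ∉ out := fun h => (Finset.mem_sdiff.1 h).2 hI
    have hrow : ∑ J ∈ out, glauberP (HG t k) lam I J
        = (1/(nTot t k : ℝ)) * ∑ v : Fin (nTot t k), ∑ J ∈ out, gTerm (HG t k) lam I J v := by
      rw [Finset.sum_congr rfl (fun J _ => glauberP_eq_gTerm (HG t k) lam I J),
        ← Finset.mul_sum, Finset.sum_comm, Fintype.card_fin]
    have hBv : ∀ v : Fin (nTot t k), ∑ J ∈ out, gTerm (HG t k) lam I J v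
        ≤ (if I = {v} then 1/(lam+1) else 0) := by
      intro v
      by_cases hv : v ∈ I
      · unfold gTerm
        simp only [if_pos hv]
        rw [sum_pair_ite (by simpa using (Finset.erase_ne_self (s := I) (a := v)).2 hv),
          if_neg houtI, add_zero]
        by_cases hsing : I = {v}
        · rw [if_pos hsing]
          split_ifs
          · exact le_rfl
          · positivity
        · rw [if_neg hsing]
          have hIne : ¬ I ⊆ {v} := by
            intro hsub
            rcases Finset.subset_singleton_iff.1 hsub with h | h
            · exact hne.ne_empty h
            · exact hsing h
          obtain ⟨u, hu, huv⟩ := Finset.not_subset.1 hIne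
          rw [Finset.mem_singleton] at huv
          have heraseA : I.erase v ∈ Aset t k := by
            refine mem_Aset.2 ⟨isIndep_subset (Finset.erase_subset v I) hind,
              ⟨u, Finset.mem_erase.2 ⟨huv, hu⟩⟩,
              fun w hw => hsubW (Finset.erase_subset v I hw)⟩
          rw [if_neg (fun h => (Finset.mem_sdiff.1 h).2 heraseA)]
      · unfold gTerm
        simp only [if_neg hv]
        have hInsing : I ≠ {v} := by
          intro h
          exact hv (h ▸ Finset.mem_singleton_self v)
        rw [if_neg hInsing]
        by_cases hins : IsIndep (HG t k) (insert v I)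
        · simp only [if_pos hins]
          rw [sum_pair_ite (by simpa using (Finset.insert_ne_self (s := I) (a := v)).2 hv),
            if_neg houtI]
          have hvW : (v:ℕ) < t*2^k := by
            by_contra hvR
            obtain ⟨u, hu⟩ := hne
            exact hins v (Finset.mem_insert_self v I) u (Finset.mem_insert_of_mem hu)
              ((adj_WR (mem_Wfin.1 (hsubW hu)) hvR).symm)
          have hinsA : insert v I ∈ Aset t k := mem_Aset.2 ⟨hins,
            ⟨v, Finset.mem_insert_self v I⟩,
            Finset.insert_subset (mem_Wfin.2 hvW) hsubW⟩
          rw [if_neg (fun h => (Finset.mem_sdiff.1 h).2 hinsA)]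
          norm_num
        · simp only [if_neg hins]
          rw [Finset.sum_ite_eq' out I (fun _ => (1:ℝ)), if_neg houtI]
    calc lam ^ I.card * ∑ J ∈ out, glauberP (HG t k) lam I J
        = ∑ v : Fin (nTot t k), lam ^ I.card * (1/(nTot t k : ℝ))
            * ∑ J ∈ out, gTerm (HG t k) lam I J v := by
          rw [hrow, ← mul_assoc, Finset.mul_sum]
      _ ≤ ∑ v : Fin (nTot t k), (if I = {v} then lam/((nTot t k : ℝ)*(lam+1)) else 0) := by
          apply Finset.sum_le_sum
          intro v _
          by_cases hsing : I = {v}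
          · rw [if_pos hsing]
            have hcard : I.card = 1 := by rw [hsing]; exact Finset.card_singleton v
            have := hBv v
            rw [if_pos hsing] at this
            calc lam ^ I.card * (1/(nTot t k : ℝ)) * ∑ J ∈ out, gTerm (HG t k) lam I J v
                ≤ lam ^ I.card * (1/(nTot t k : ℝ)) * (1/(lam+1)) := by
                  apply mul_le_mul_of_nonneg_left this (by positivity)
              _ = lam/((nTot t k : ℝ)*(lam+1)) := by
                  rw [hcard, pow_one]
                  field_simp
          · rw [if_neg hsing]
            have := hBv v
            rw [if_neg hsing] at this
            have hg0 : (0:ℝ) ≤ ∑ J ∈ out, gTerm (HG t k) lam I J v :=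
              Finset.sum_nonneg fun J _ => gTerm_nonneg hlam0.le I J v
            have : ∑ J ∈ out, gTerm (HG t k) lam I J v = 0 := le_antisymm this hg0
            rw [this, mul_zero]
  calc ∑ I ∈ Aset t k, lam ^ I.card * ∑ J ∈ out, glauberP (HG t k) lam I J
      ≤ ∑ I ∈ Aset t k, ∑ v : Fin (nTot t k),
          (if I = {v} then lam/((nTot t k : ℝ)*(lam+1)) else 0) :=
        Finset.sum_le_sum hperI
    _ = ∑ v : Fin (nTot t k), ∑ I ∈ Aset t k,
          (if I = {v} then lam/((nTot t k : ℝ)*(lam+1)) else 0) := Finset.sum_comm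
    _ ≤ ∑ _v : Fin (nTot t k), lam/((nTot t k : ℝ)*(lam+1)) := by
        apply Finset.sum_le_sum
        intro v _
        rw [Finset.sum_ite_eq' (Aset t k) ({v} : Finset (Fin (nTot t k)))
          (fun _ => lam/((nTot t k : ℝ)*(lam+1)))]
        split_ifs
        · exact le_rfl
        · positivity
    _ = (nTot t k : ℝ) * (lam/((nTot t k : ℝ)*(lam+1))) := by
        rw [Finset.sum_const, Finset.card_univ, Fintype.card_fin, nsmul_eq_mul]
    _ = lam/(lam+1) := by field_simp
    _ ≤ 1 := by rw [div_le_one h1]; linarith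

end QfBound
section FinalNumerics
set_option linter.unusedSectionVars false
set_option maxHeartbeats 2000000

lemma two_pow_lin (kk : ℕ) (h : 4 ≤ kk) : 2*kk+5 ≤ 2^kk := by
  induction kk with
  | zero => omega
  | succ n ih =>
    by_cases h4 : 4 ≤ n
    · have h1 := ih h4
      have h2 : 2^(n+1) = 2 * 2^n := by rw [pow_succ]; ring
      omega
    · have hn3 : n = 3 := by omega
      subst hn3
      norm_num

variable {t k : ℕ}

lemma r_le (ht : 1 ≤ t) (hkt : t ≤ k) (hk4 : 4 ≤ k) : t*(k+t+3)+2 ≤ t * 2^k := by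
  have h1 : 2*k+5 ≤ 2^k := two_pow_lin k hk4
  have h2 : k+t+5 ≤ 2^k := by omega
  calc t*(k+t+3)+2 ≤ t*(k+t+3)+2*t := by omega
    _ = t*(k+t+5) := by ring
    _ ≤ t*2^k := Nat.mul_le_mul_left t h2

lemma nTot_le_aux (ht : 1 ≤ t) (hkt : t ≤ k) (hk4 : 4 ≤ k) : nTot t k ≤ 2*(t*2^k) := by
  have := r_le ht hkt hk4
  unfold nTot
  omega

lemma nTot_add_one_le (ht : 1 ≤ t) (hkt : t ≤ k) (hk4 : 4 ≤ k) :
    nTot t k + 1 ≤ 2^(k+t+2) := by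
  have hr : t*(k+t+3)+2 ≤ t*2^k := r_le ht hkt hk4
  have h2 : t ≤ 2^t := Nat.le_of_lt (Nat.lt_two_pow_self (n := t))
  have e1 : t*2^k ≤ 2^t*2^k := Nat.mul_le_mul_right _ h2
  have e2 : 2^(k+t+2) = 4*(2^t*2^k) := by rw [pow_add, pow_add]; ring
  have e3 : 1 ≤ 2^t*2^k :=
    Nat.mul_pos (Nat.two_pow_pos t) (Nat.two_pow_pos k)
  unfold nTot
  omega

end FinalNumerics

theorem statement_7' (t : ℕ) (ht : 1 ≤ t) :
    ∃ c : ℝ, 0 < c ∧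
      ∀ N : ℕ, ∃ n : ℕ, N ≤ n ∧
        ∃ G : SimpleGraph (Fin n),
          pathAlpha G = t ∧
          ∀ lam : ℝ, 1 ≤ lam →
            c * ((n : ℝ) * lam) ^ t ≤ (mixingTime G lam : ℝ) := by
  classical
  have htR : (0:ℝ) < t := by exact_mod_cast ht
  have h2t : (0:ℝ) < 2*(t:ℝ) := by linarith
  have hcpos : (0:ℝ) < 2*(2*(t:ℝ))^t := mul_pos (by norm_num) (pow_pos h2t t)
  refine ⟨1/(2*(2*(t:ℝ))^t), by positivity, ?_⟩
  intro N
  set k := max (max t 4) N with hkdef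
  have hkt : t ≤ k := le_trans (le_max_left t 4) (le_max_left _ N)
  have hk4 : 4 ≤ k := le_trans (le_max_right t 4) (le_max_left _ N)
  have hkN : N ≤ k := le_max_right _ _
  refine ⟨nTot t k, ?_, HG t k, pathAlpha_eq ht, ?_⟩
  · have h2 : k ≤ 2^k := Nat.le_of_lt (Nat.lt_two_pow_self (n := k))
    have h3 : 2^k ≤ t*2^k := Nat.le_mul_of_pos_left _ ht
    have h4 := tm_le_nTot (t := t) (k := k)
    omega
  · intro lam hlam
    have hlam0 : (0:ℝ) < lam := by linarith
    have hV : 0 < Fintype.card (Fin (nTot t k)) := by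
      rw [Fintype.card_fin]
      exact nTot_pos
    have hreal_n : ((nTot t k : ℝ) + 1) ≤ 2^(k+t+2) := by
      have h := nTot_add_one_le (t := t) (k := k) ht hkt hk4
      have h' : ((nTot t k + 1 : ℕ) : ℝ) ≤ ((2^(k+t+2) : ℕ) : ℝ) := Nat.cast_le.2 h
      push_cast at h'
      linarith
    have hn1 : (0:ℝ) ≤ (nTot t k : ℝ) + 1 := by positivity
    have hZbig : (∑ I ∈ Aset t k, lam ^ I.card) * 4 ≤ Z (HG t k) lam := by
      have h1 : ∑ I ∈ Aset t k, lam ^ I.card ≤ ((nTot t k : ℝ)+1)^t * lam^t := wA_upper hlam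
      have h2 : ((nTot t k : ℝ)+1)^t * lam^t * 4 ≤ (lam+1)^(t*(k+t+3)+2) := by
        have e : t*(k+t+3)+2 = (k+t+2)*t + t + 2 := by ring
        rw [e, pow_add, pow_add, pow_mul]
        have b1 : ((nTot t k : ℝ)+1)^t ≤ ((lam+1)^(k+t+2))^t := by
          apply pow_le_pow_left₀ hn1
          calc (nTot t k : ℝ) + 1 ≤ 2^(k+t+2) := hreal_n
            _ ≤ (lam+1)^(k+t+2) := pow_le_pow_left₀ (by norm_num) (by linarith) _
        have b2 : lam^t ≤ (lam+1)^t := pow_le_pow_left₀ hlam0.le (by linarith) t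
        have b3 : (4:ℝ) ≤ (lam+1)^2 := by nlinarith
        exact mul_le_mul (mul_le_mul b1 b2 (by positivity) (by positivity)) b3
          (by norm_num) (by positivity)
      calc (∑ I ∈ Aset t k, lam ^ I.card) * 4 ≤ ((nTot t k : ℝ)+1)^t * lam^t * 4 :=
            mul_le_mul_of_nonneg_right h1 (by norm_num)
        _ ≤ (lam+1)^(t*(k+t+3)+2) := h2
        _ ≤ Z (HG t k) lam := Z_lower hlam
    have hcond := conductance_lower_bound hlam hV (Aset_subset (t := t) (k := k))
      (Aset_nonempty ht) hZbig
    have hQf := Qf_le_one (t := t) (k := k) hlam ht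
    have hτ0 : (0:ℝ) ≤ (mixingTime (HG t k) lam : ℝ) := Nat.cast_nonneg _
    have hwt : ((2^k : ℝ) * lam)^t ≤ 2 * (mixingTime (HG t k) lam : ℝ) := by
      calc ((2^k:ℝ)*lam)^t ≤ ∑ I ∈ Aset t k, lam ^ I.card := wA_lower hlam ht
        _ ≤ 2 * (mixingTime (HG t k) lam : ℝ) *
            (∑ I ∈ Aset t k, lam ^ I.card *
              ∑ J ∈ indepSets (HG t k) \ Aset t k, glauberP (HG t k) lam I J) := hcond
        _ ≤ 2 * (mixingTime (HG t k) lam : ℝ) * 1 :=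
            mul_le_mul_of_nonneg_left hQf (by positivity)
        _ = 2 * (mixingTime (HG t k) lam : ℝ) := mul_one _
    have hnle : (nTot t k : ℝ) ≤ 2 * (t:ℝ) * 2^k := by
      have h := nTot_le_aux (t := t) (k := k) ht hkt hk4
      have h' : ((nTot t k : ℕ) : ℝ) ≤ ((2*(t*2^k) : ℕ) : ℝ) := Nat.cast_le.2 h
      push_cast at h'
      linarith
    have hmain : ((nTot t k : ℝ) * lam)^t ≤ (2*(t:ℝ))^t * ((2^k:ℝ)*lam)^t := by
      rw [← mul_pow]
      apply pow_le_pow_left₀ (by positivity)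
      calc (nTot t k : ℝ) * lam ≤ (2*(t:ℝ)*2^k) * lam :=
            mul_le_mul_of_nonneg_right hnle hlam0.le
        _ = (2*(t:ℝ)) * ((2^k:ℝ)*lam) := by ring
    calc 1/(2*(2*(t:ℝ))^t) * ((nTot t k : ℝ) * lam)^t
        ≤ 1/(2*(2*(t:ℝ))^t) * ((2*(t:ℝ))^t * ((2^k:ℝ)*lam)^t) :=
          mul_le_mul_of_nonneg_left hmain (by positivity)
      _ = ((2^k:ℝ)*lam)^t / 2 := by
          field_simp
      _ ≤ (mixingTime (HG t k) lam : ℝ) := by linarith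

/-- For every integer `t ≥ 1` there is a constant `c_t > 0` (depending only
on `t`) and infinitely many graphs `G` with path-independence number `path-α(G) = t` such
that for every `λ ≥ 1`, `τ_{G,λ} ≥ c_t · (nλ)^t` where `n = |V(G)|`. -/
theorem statement_7 (t : ℕ) (ht : 1 ≤ t) :
    ∃ c : ℝ, 0 < c ∧
      ∀ N : ℕ, ∃ n : ℕ, N ≤ n ∧
        ∃ G : SimpleGraph (Fin n),
          pathAlpha G = t ∧
          ∀ lam : ℝ, 1 ≤ lam →
            c * ((n : ℝ) * lam) ^ t ≤ (mixingTime G lam : ℝ) := by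
  exact statement_7' t ht
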